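/- arXiv:1509.06276 — 4 statements merged into one kernel-verified Lean document; each statement's English description precedes it below -/
import Mathlib

section
/- An ordered GIFS (A,Γ,G,≺) is a linear GIFS if and only if it satisfies the chain condition. -/
open MeasureTheory Set

noncomputable section

/-- A graph-directed iterated function system (GIFS) with vertex set `Fin N`,
a finite edge set, and a contracting similitude of ratio `r e ∈ (0,1)` for each edge. -/
structure GIFS (X : Type) [MetricSpace X] (N : ℕ) where
  Edge : Type
  fintypeEdge : Fintype Edge
  src : Edge → Fin N
  tgt : Edge → Fin N
  r : Edge → ℝ
  r_pos : ∀ e, 0 < r e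
  r_lt_one : ∀ e, r e < 1
  g : Edge → X → X
  g_sim : ∀ e x y, dist (g e x) (g e y) = r e * dist x y

attribute [instance] GIFS.fintypeEdge

/-- The finite prefix of length `n` of an infinite word. -/
def prefixList {α : Type} (ω : ℕ → α) (n : ℕ) : List α := List.ofFn fun k : Fin n => ω k

/-- Spectral radius of a real square matrix: supremum of the moduli of its
complex eigenvalues. -/
def specRad {n : ℕ} (A : Matrix (Fin n) (Fin n) ℝ) : ℝ :=
  sSup ((fun z => ‖z‖) '' spectrum ℂ (A.map Complex.ofReal))

namespace GIFS

variable {X : Type} [MetricSpace X] {N : ℕ}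

/-- `γ` is a finite path (possibly empty) starting from the vertex `i`. -/
def IsPathFrom (G : GIFS X N) (i : Fin N) (γ : List G.Edge) : Prop :=
  γ.Chain' (fun a b => G.tgt a = G.src b) ∧ ∀ e ∈ γ.head?, G.src e = i

/-- The terminal vertex of a finite path starting at `i`. -/
def pathTgt (G : GIFS X N) (i : Fin N) (γ : List G.Edge) : Fin N :=
  (γ.getLast?).elim i G.tgt

/-- The composition `g_{γ₁} ∘ ⋯ ∘ g_{γ_n}` along a finite path. -/
def pathMap (G : GIFS X N) (γ : List G.Edge) : X → X :=
  γ.foldr (fun e f => G.g e ∘ f) id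

/-- The cylinder set `E_γ = g_{γ₁} ∘ ⋯ ∘ g_{γ_n} (E_{t(γ)})` of a finite path from `i`. -/
def pathSet (G : GIFS X N) (E : Fin N → Set X) (i : Fin N) (γ : List G.Edge) : Set X :=
  G.pathMap γ '' E (G.pathTgt i γ)

/-- `E` is the family of invariant sets of the GIFS: nonempty compact sets
satisfying the set equations. -/
def IsInvariant (G : GIFS X N) (E : Fin N → Set X) : Prop :=
  (∀ i, (E i).Nonempty) ∧ (∀ i, IsCompact (E i)) ∧
    ∀ i, E i = ⋃ e ∈ {e : G.Edge | G.src e = i}, G.g e '' E (G.tgt e)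

/-- The open set condition witnessed by a given family of open sets. -/
def OSCWith (G : GIFS X N) (U : Fin N → Set X) : Prop :=
  (∀ i, (U i).Nonempty ∧ IsOpen (U i)) ∧
  (∀ e : G.Edge, G.g e '' U (G.tgt e) ⊆ U (G.src e)) ∧
  ∀ e f : G.Edge, e ≠ f → G.src e = G.src f →
    Disjoint (G.g e '' U (G.tgt e)) (G.g f '' U (G.tgt f))

/-- The open set condition. -/
def OSC (G : GIFS X N) : Prop := ∃ U, G.OSCWith U

/-- The base graph is strongly connected. -/
def StronglyConnected (G : GIFS X N) : Prop :=
  ∀ i j : Fin N, ∃ γ : List G.Edge, γ ≠ [] ∧ G.IsPathFrom i γ ∧ G.pathTgt i γ = j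

/-- The matrix `M(t)` with entries `M(t)_{ij} = ∑_{e ∈ Γ_{ij}} r_e ^ t`. -/
def M (G : GIFS X N) (t : ℝ) : Matrix (Fin N) (Fin N) ℝ :=
  Matrix.of fun i j => ∑ e : G.Edge, if G.src e = i ∧ G.tgt e = j then G.r e ^ t else 0

/-- `δ` is the similarity dimension: the (unique) positive real with `ρ(M(δ)) = 1`. -/
def IsSimDim (G : GIFS X N) (δ : ℝ) : Prop := 0 < δ ∧ specRad (G.M δ) = 1

/-- The space of infinite paths emanating from the vertex `i`. -/
def InfPath (G : GIFS X N) (i : Fin N) : Type :=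
  {ω : ℕ → G.Edge // G.src (ω 0) = i ∧ ∀ n, G.tgt (ω n) = G.src (ω (n + 1))}

instance (G : GIFS X N) : MeasurableSpace G.Edge := ⊤

instance (G : GIFS X N) (i : Fin N) : MeasurableSpace (G.InfPath i) :=
  MeasurableSpace.comap Subtype.val MeasurableSpace.pi

/-- `π` is the symbolic projection `Γ_i^∞ → E_i` : the image of an infinite path
belongs to every cylinder set of its finite prefixes. -/
def IsCoding (G : GIFS X N) (E : Fin N → Set X) (i : Fin N) (π : G.InfPath i → X) : Prop :=
  ∀ (ω : G.InfPath i) (n : ℕ), π ω ∈ G.pathSet E i (prefixList ω.1 n)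

end GIFS

/-- An ordered GIFS: a GIFS with a partial order on the edges which restricts to
a linear order on each `Γ_i` (edges emanating from `i`), edges emanating from
distinct vertices being incomparable. -/
structure OGIFS (X : Type) [MetricSpace X] (N : ℕ) extends GIFS X N where
  elt : Edge → Edge → Prop
  elt_src : ∀ {a b}, elt a b → src a = src b
  elt_irrefl : ∀ a, ¬ elt a a
  elt_trans : ∀ {a b c}, elt a b → elt b c → elt a c
  elt_total : ∀ a b, src a = src b → elt a b ∨ a = b ∨ elt b a

namespace OGIFS

variable {X : Type} [MetricSpace X] {N : ℕ}

/-- The induced dictionary order on finite paths. -/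
def PathLt (G : OGIFS X N) (γ ω : List G.Edge) : Prop := List.Lex G.elt γ ω

/-- Two adjacent edges in some `Γ_i`: consecutive in the order `≺`. -/
def AdjacentEdges (G : OGIFS X N) (e f : G.Edge) : Prop :=
  G.elt e f ∧ ¬ ∃ e', G.elt e e' ∧ G.elt e' f

/-- Two same-length paths from `i`, adjacent (consecutive) in the dictionary order. -/
def Adjacent (G : OGIFS X N) (i : Fin N) (γ ω : List G.Edge) : Prop :=
  G.toGIFS.IsPathFrom i γ ∧ G.toGIFS.IsPathFrom i ω ∧ γ.length = ω.length ∧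
  G.PathLt γ ω ∧
  ¬ ∃ η : List G.Edge, G.toGIFS.IsPathFrom i η ∧ η.length = γ.length ∧
      G.PathLt γ η ∧ G.PathLt η ω

/-- A linear GIFS: every two adjacent cylinders of invariant sets intersect. -/
def IsLinear (G : OGIFS X N) (E : Fin N → Set X) : Prop :=
  ∀ (i : Fin N) (γ ω : List G.Edge), G.Adjacent i γ ω →
    (G.toGIFS.pathSet E i γ ∩ G.toGIFS.pathSet E i ω).Nonempty

/-- An infinite path from `i` is lowest if all its finite prefixes are lowest in the
dictionary order among same-length paths from `i`. -/
def IsLowest (G : OGIFS X N) (i : Fin N) (ω : G.toGIFS.InfPath i) : Prop :=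
  ∀ (n : ℕ) (γ : List G.Edge), G.toGIFS.IsPathFrom i γ → γ.length = n →
    γ = prefixList ω.1 n ∨ G.PathLt (prefixList ω.1 n) γ

/-- An infinite path from `i` is highest if all its finite prefixes are highest. -/
def IsHighest (G : OGIFS X N) (i : Fin N) (ω : G.toGIFS.InfPath i) : Prop :=
  ∀ (n : ℕ) (γ : List G.Edge), G.toGIFS.IsPathFrom i γ → γ.length = n →
    γ = prefixList ω.1 n ∨ G.PathLt γ (prefixList ω.1 n)

/-- `a` is the head of `E_i`: the projection of the lowest infinite path from `i`. -/
def IsHead (G : OGIFS X N) (E : Fin N → Set X) (i : Fin N) (a : X) : Prop :=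
  ∃ ω : G.toGIFS.InfPath i, G.IsLowest i ω ∧
    ∀ n : ℕ, a ∈ G.toGIFS.pathSet E i (prefixList ω.1 n)

/-- `a` is the tail of `E_i`: the projection of the highest infinite path from `i`. -/
def IsTail (G : OGIFS X N) (E : Fin N → Set X) (i : Fin N) (a : X) : Prop :=
  ∃ ω : G.toGIFS.InfPath i, G.IsHighest i ω ∧
    ∀ n : ℕ, a ∈ G.toGIFS.pathSet E i (prefixList ω.1 n)

/-- The chain condition: for adjacent edges `e ≺ f` emanating from a common vertex,
`g_e(tail of E_{t(e)}) = g_f(head of E_{t(f)})`. -/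
def ChainCondition (G : OGIFS X N) (E : Fin N → Set X) : Prop :=
  ∀ e f : G.Edge, G.AdjacentEdges e f →
    ∀ b a : X, G.IsTail E (G.tgt e) b → G.IsHead E (G.tgt f) a → G.g e b = G.g f a

open Classical in
/-- Translation part of the maps of the measure-recording GIFS:
`b_e = ∑_{e' ≺ e} h_{t(e')} r_{e'}^δ`. -/
def bCoef (G : OGIFS X N) (δ : ℝ) (h : Fin N → ℝ) (e : G.Edge) : ℝ :=
  ∑ e' : G.Edge, if G.elt e' e then h (G.tgt e') * G.r e' ^ δ else 0

/-- The maps `f_e (x) = r_e^δ x + b_e` of the measure-recording GIFS. -/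
def fmap (G : OGIFS X N) (δ : ℝ) (h : Fin N → ℝ) (e : G.Edge) : ℝ → ℝ :=
  fun x => G.r e ^ δ * x + G.bCoef δ h e

/-- Composition of the measure-recording maps along a finite path. -/
def fPathMap (G : OGIFS X N) (δ : ℝ) (h : Fin N → ℝ) (γ : List G.Edge) : ℝ → ℝ :=
  γ.foldr (fun e f => G.fmap δ h e ∘ f) id

/-- Cylinder intervals `F_γ` of the measure-recording GIFS (with `F_i = [0, h_i]`). -/
def fPathSet (G : OGIFS X N) (δ : ℝ) (h : Fin N → ℝ) (i : Fin N) (γ : List G.Edge) : Set ℝ :=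
  G.fPathMap δ h γ '' Icc 0 (h (G.toGIFS.pathTgt i γ))

/-- `ρ` is the symbolic projection `Γ_i^∞ → F_i` of the measure-recording GIFS. -/
def IsFCoding (G : OGIFS X N) (δ : ℝ) (h : Fin N → ℝ) (i : Fin N)
    (ρ : G.toGIFS.InfPath i → ℝ) : Prop :=
  ∀ (ω : G.toGIFS.InfPath i) (n : ℕ), ρ ω ∈ G.fPathSet δ h i (prefixList ω.1 n)

end OGIFS

/-- An optimal parametrization of an `s`-set `K`: a surjection `[0,1] → K` which is
almost one-to-one, measure-preserving and `1/s`-Hölder continuous. -/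
def OptimalParam {X : Type} [MetricSpace X] [MeasurableSpace X] [BorelSpace X]
    (s : ℝ) (K : Set X) (ψ : ℝ → X) : Prop :=
  ψ '' Icc (0:ℝ) 1 = K ∧
  (∃ K' ⊆ K, ∃ I' ⊆ Icc (0:ℝ) 1,
      μH[s] (K \ K') = 0 ∧ volume (Icc (0:ℝ) 1 \ I') = 0 ∧ BijOn ψ I' K') ∧
  (∀ F : Set ℝ, F ⊆ Icc (0:ℝ) 1 → MeasurableSet F →
      μH[s] (ψ '' F) = μH[s] K * volume F) ∧
  (∀ B : Set X, B ⊆ K → MeasurableSet B →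
      volume (ψ ⁻¹' B ∩ Icc (0:ℝ) 1) = (μH[s] K)⁻¹ * μH[s] B) ∧
  ∃ c' : NNReal, 0 < c' ∧ HolderOnWith c' (Real.toNNReal (1 / s)) ψ (Icc (0:ℝ) 1)

end
noncomputable section Aux

namespace OGIFS

open List GIFS

variable {X : Type} [MetricSpace X] {N : ℕ} (G : OGIFS X N)

/-! ### Lex order basics -/

lemma lex_asymm : ∀ {u v : List G.Edge}, List.Lex G.elt u v → List.Lex G.elt v u → False := by
  intro u v h1
  induction h1 with
  | nil => intro h2; cases h2
  | @rel a l₁ b l₂ hab =>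
    intro h2
    cases h2 with
    | rel hba => exact G.elt_irrefl a (G.elt_trans hab hba)
    | cons h => exact G.elt_irrefl a hab
  | @cons a l₁ l₂ h ih =>
    intro h2
    cases h2 with
    | rel hba => exact G.elt_irrefl a hba
    | cons h' => exact ih h'

lemma lex_irrefl (u : List G.Edge) : ¬ List.Lex G.elt u u := fun h => G.lex_asymm h h

lemma lex_append_left (l : List G.Edge) {u v : List G.Edge}
    (h : List.Lex G.elt u v) : List.Lex G.elt (l ++ u) (l ++ v) := by
  induction l with
  | nil => exact h
  | cons a t ih => exact List.Lex.cons ih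

/-! ### Path basics -/

lemma isPathFrom_nil (i : Fin N) : G.toGIFS.IsPathFrom i [] := by
  constructor
  · exact List.isChain_nil
  · intro e he; simp at he

lemma isPathFrom_cons {i : Fin N} {a : G.Edge} {l : List G.Edge} :
    G.toGIFS.IsPathFrom i (a :: l) ↔ G.src a = i ∧ G.toGIFS.IsPathFrom (G.tgt a) l := by
  unfold GIFS.IsPathFrom
  unfold List.Chain'
  rw [List.isChain_cons]
  constructor
  · rintro ⟨⟨h1, h2⟩, h3⟩
    refine ⟨h3 a rfl, h2, fun e he => (h1 e he).symm⟩
  · rintro ⟨h1, h2, h3⟩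
    exact ⟨⟨fun e he => (h3 e he).symm, h2⟩, by rintro e ⟨rfl⟩; exact h1⟩

lemma pathTgt_cons (i : Fin N) (a : G.Edge) (l : List G.Edge) :
    G.toGIFS.pathTgt i (a :: l) = G.toGIFS.pathTgt (G.tgt a) l := by
  unfold GIFS.pathTgt
  cases l with
  | nil => rfl
  | cons b t => rw [List.getLast?_cons_cons]; rfl

lemma pathTgt_append_cons (i : Fin N) (η : List G.Edge) (e : G.Edge) (δ : List G.Edge) :
    G.toGIFS.pathTgt i (η ++ e :: δ) = G.toGIFS.pathTgt (G.tgt e) δ := by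
  induction η generalizing i with
  | nil => exact G.pathTgt_cons i e δ
  | cons a t ih => rw [List.cons_append, G.pathTgt_cons]; exact ih _

lemma isPathFrom_append {i : Fin N} {u v : List G.Edge} :
    G.toGIFS.IsPathFrom i (u ++ v) ↔
      G.toGIFS.IsPathFrom i u ∧ G.toGIFS.IsPathFrom (G.toGIFS.pathTgt i u) v := by
  induction u generalizing i with
  | nil =>
    simp only [List.nil_append]
    exact ⟨fun h => ⟨G.isPathFrom_nil i, h⟩, fun h => h.2⟩
  | cons a t ih =>
    rw [List.cons_append, G.isPathFrom_cons, ih, G.isPathFrom_cons, G.pathTgt_cons, and_assoc]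

lemma pathMap_cons (a : G.Edge) (l : List G.Edge) :
    G.toGIFS.pathMap (a :: l) = G.g a ∘ G.toGIFS.pathMap l := rfl

lemma pathMap_append (u v : List G.Edge) :
    G.toGIFS.pathMap (u ++ v) = G.toGIFS.pathMap u ∘ G.toGIFS.pathMap v := by
  induction u with
  | nil => rfl
  | cons a t ih => rw [List.cons_append, pathMap_cons, pathMap_cons, ih]; rfl

lemma dist_pathMap (γ : List G.Edge) (x y : X) :
    dist (G.toGIFS.pathMap γ x) (G.toGIFS.pathMap γ y) = (γ.map G.r).prod * dist x y := by
  induction γ with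
  | nil => simp [GIFS.pathMap]
  | cons a t ih =>
    rw [pathMap_cons, Function.comp_apply, Function.comp_apply, G.g_sim, ih]
    simp [mul_assoc]

lemma prod_map_r_nonneg (γ : List G.Edge) : 0 ≤ (γ.map G.r).prod := by
  induction γ with
  | nil => simp
  | cons a t ih =>
    rw [List.map_cons, List.prod_cons]
    exact mul_nonneg (G.r_pos a).le ih

lemma prod_map_r_le_pow {R : ℝ} (hR0 : 0 ≤ R) (hr : ∀ e, G.r e ≤ R) (γ : List G.Edge) :
    (γ.map G.r).prod ≤ R ^ γ.length := by
  induction γ with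
  | nil => simp
  | cons a t ih =>
    rw [List.map_cons, List.prod_cons, List.length_cons, pow_succ']
    exact mul_le_mul (hr a) ih (G.prod_map_r_nonneg t) hR0

lemma pathMap_continuous (γ : List G.Edge) : Continuous (G.toGIFS.pathMap γ) := by
  apply (LipschitzWith.of_dist_le_mul (K := Real.toNNReal ((γ.map G.r).prod))
    (f := G.toGIFS.pathMap γ) ?_).continuous
  intro x y
  rw [G.dist_pathMap]
  rw [Real.coe_toNNReal _ (G.prod_map_r_nonneg γ)]

/-! ### Prefixes of infinite paths -/

lemma prefixList_zero (ω : ℕ → G.Edge) : prefixList ω 0 = [] := rfl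

lemma prefixList_succ (ω : ℕ → G.Edge) (n : ℕ) :
    prefixList ω (n + 1) = ω 0 :: prefixList (fun k => ω (k + 1)) n := by
  unfold prefixList
  rw [List.ofFn_succ]
  rfl

lemma prefixList_succ' (ω : ℕ → G.Edge) (n : ℕ) :
    prefixList ω (n + 1) = prefixList ω n ++ [ω n] := by
  unfold prefixList
  rw [List.ofFn_succ']
  simp [List.concat_eq_append]

lemma length_prefixList (ω : ℕ → G.Edge) (n : ℕ) : (prefixList ω n).length = n := by
  simp [prefixList]

lemma isPathFrom_prefixList {i : Fin N} {ω : ℕ → G.Edge}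
    (h0 : G.src (ω 0) = i) (hc : ∀ k, G.tgt (ω k) = G.src (ω (k + 1))) (n : ℕ) :
    G.toGIFS.IsPathFrom i (prefixList ω n) := by
  induction n generalizing i ω with
  | zero => exact G.isPathFrom_nil i
  | succ n ih =>
    rw [G.prefixList_succ, G.isPathFrom_cons]
    exact ⟨h0, ih (hc 0).symm (fun k => hc (k + 1))⟩

lemma pathTgt_prefixList {i : Fin N} {ω : ℕ → G.Edge}
    (h0 : G.src (ω 0) = i) (hc : ∀ k, G.tgt (ω k) = G.src (ω (k + 1))) (n : ℕ) :
    G.toGIFS.pathTgt i (prefixList ω n) = G.src (ω n) := by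
  induction n generalizing i ω with
  | zero => exact h0.symm
  | succ n ih =>
    rw [G.prefixList_succ, G.pathTgt_cons]
    exact ih (hc 0).symm (fun k => hc (k + 1))

/-! ### Extending cylinder membership -/

lemma mem_pathSet_extend {E : Fin N → Set X} {e : G.Edge} {δ : List G.Edge} {x : X}
    (hx : x ∈ G.toGIFS.pathSet E (G.tgt e) δ) (i : Fin N) (η : List G.Edge) :
    G.toGIFS.pathMap η (G.g e x) ∈ G.toGIFS.pathSet E i (η ++ e :: δ) := by
  obtain ⟨y, hy, rfl⟩ := hx
  refine ⟨y, ?_, ?_⟩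
  · rw [G.pathTgt_append_cons]; exact hy
  · rw [G.pathMap_append, Function.comp_apply, G.pathMap_cons]; rfl

/-! ### Trichotomy for same-length paths -/

lemma path_trichotomy :
    ∀ (γ : List G.Edge) (ω : List G.Edge) (i : Fin N), G.toGIFS.IsPathFrom i γ →
      G.toGIFS.IsPathFrom i ω → γ.length = ω.length →
      γ = ω ∨ List.Lex G.elt γ ω ∨ List.Lex G.elt ω γ := by
  intro γ
  induction γ with
  | nil =>
    intro ω i _ _ hlen
    left; exact (List.eq_nil_of_length_eq_zero hlen.symm).symm
  | cons a t ih =>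
    intro ω i hγ hω hlen
    cases ω with
    | nil => simp at hlen
    | cons b s =>
      rw [G.isPathFrom_cons] at hγ hω
      rcases G.elt_total a b (hγ.1.trans hω.1.symm) with h | h | h
      · exact Or.inr (Or.inl (List.Lex.rel h))
      · subst h
        rcases ih s (G.tgt a) hγ.2 hω.2 (by simpa using hlen) with h | h | h
        · left; rw [h]
        · exact Or.inr (Or.inl (List.Lex.cons h))
        · exact Or.inr (Or.inr (List.Lex.cons h))
      · exact Or.inr (Or.inr (List.Lex.rel h))

/-! ### Extremal (highest / lowest) infinite paths -/

lemma exists_greatest {α : Type*} (R : α → α → Prop)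
    (Rtrans : ∀ {a b c}, R a b → R b c → R a c)
    (s : Finset α) (hs : s.Nonempty)
    (htot : ∀ a ∈ s, ∀ b ∈ s, R a b ∨ a = b ∨ R b a) :
    ∃ m ∈ s, ∀ e ∈ s, e = m ∨ R e m := by
  classical
  induction s using Finset.induction with
  | empty => simp at hs
  | @insert a s' ha ih =>
    rcases s'.eq_empty_or_nonempty with rfl | hs'
    · exact ⟨a, Finset.mem_insert_self a _, by simp⟩
    · obtain ⟨m, hm, hmax⟩ := ih hs'
        (fun x hx y hy => htot x (Finset.mem_insert_of_mem hx) y (Finset.mem_insert_of_mem hy))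
      rcases htot a (Finset.mem_insert_self a _) m (Finset.mem_insert_of_mem hm) with h | h | h
      · refine ⟨m, Finset.mem_insert_of_mem hm, ?_⟩
        intro e he
        rcases Finset.mem_insert.mp he with rfl | he'
        · exact Or.inr h
        · exact hmax e he'
      · refine ⟨m, Finset.mem_insert_of_mem hm, ?_⟩
        intro e he
        rcases Finset.mem_insert.mp he with rfl | he'
        · exact Or.inl h
        · exact hmax e he'
      · refine ⟨a, Finset.mem_insert_self a _, ?_⟩
        intro e he
        rcases Finset.mem_insert.mp he with rfl | he'
        · exact Or.inl rfl
        · rcases hmax e he' with rfl | he'' <;> [exact Or.inr h; exact Or.inr (Rtrans he'' h)]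

lemma exists_src (hsrc : ∀ j : Fin N, ∃ e : G.Edge, G.src e = j) (j : Fin N) :
    ∃ m : G.Edge, G.src m = j ∧ ∀ e, G.src e = j → e = m ∨ G.elt e m := by
  classical
  obtain ⟨e0, he0⟩ := hsrc j
  obtain ⟨m, hm, hmax⟩ := exists_greatest G.elt (fun h1 h2 => G.elt_trans h1 h2)
    (Finset.univ.filter fun e => G.src e = j) ⟨e0, by simp [he0]⟩
    (fun a ha b hb => G.elt_total a b (by
      simp only [Finset.mem_filter] at ha hb; rw [ha.2, hb.2]))
  simp only [Finset.mem_filter, Finset.mem_univ, true_and] at hm hmax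
  exact ⟨m, hm, fun e he => hmax e he⟩

lemma exists_src_min (hsrc : ∀ j : Fin N, ∃ e : G.Edge, G.src e = j) (j : Fin N) :
    ∃ m : G.Edge, G.src m = j ∧ ∀ e, G.src e = j → e = m ∨ G.elt m e := by
  classical
  obtain ⟨e0, he0⟩ := hsrc j
  obtain ⟨m, hm, hmax⟩ := exists_greatest (fun a b => G.elt b a) (fun h1 h2 => G.elt_trans h2 h1)
    (Finset.univ.filter fun e => G.src e = j) ⟨e0, by simp [he0]⟩
    (fun a ha b hb => by
      rcases G.elt_total a b (by
        simp only [Finset.mem_filter] at ha hb; rw [ha.2, hb.2]) with h | h | h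
      · exact Or.inr (Or.inr h)
      · exact Or.inr (Or.inl h)
      · exact Or.inl h)
  simp only [Finset.mem_filter, Finset.mem_univ, true_and] at hm hmax
  exact ⟨m, hm, fun e he => hmax e he⟩

/-- greedy sequence: `seqFrom sel n j` is the `n`-th edge of the path from `j`
obtained by always following `sel`. -/
private def seqFrom (sel : Fin N → G.Edge) : ℕ → Fin N → G.Edge
  | 0, j => sel j
  | n + 1, j => seqFrom sel n (G.tgt (sel j))

lemma seqFrom_src (sel : Fin N → G.Edge) (hsel : ∀ j, G.src (sel j) = j) :
    ∀ (n : ℕ) (j : Fin N), G.tgt (G.seqFrom sel n j) = G.src (G.seqFrom sel (n + 1) j) := by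
  intro n
  induction n with
  | zero => intro j; exact (hsel (G.tgt (sel j))).symm
  | succ n ih => intro j; exact ih (G.tgt (sel j))

lemma prefixList_seqFrom (sel : Fin N → G.Edge) (n : ℕ) (j : Fin N) :
    prefixList (fun k => G.seqFrom sel k j) (n + 1) =
      sel j :: prefixList (fun k => G.seqFrom sel k (G.tgt (sel j))) n := by
  rw [G.prefixList_succ]
  rfl

lemma seqFrom_highest (sel : Fin N → G.Edge) (hsel : ∀ j, G.src (sel j) = j)
    (hmax : ∀ j e, G.src e = j → e = sel j ∨ G.elt e (sel j)) :
    ∀ (n : ℕ) (j : Fin N) (γ : List G.Edge), G.toGIFS.IsPathFrom j γ → γ.length = n →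
      γ = prefixList (fun k => G.seqFrom sel k j) n ∨
        List.Lex G.elt γ (prefixList (fun k => G.seqFrom sel k j) n) := by
  intro n
  induction n with
  | zero =>
    intro j γ _ hlen
    left; exact List.eq_nil_of_length_eq_zero hlen
  | succ n ih =>
    intro j γ hγ hlen
    cases γ with
    | nil => simp at hlen
    | cons a t =>
      rw [G.isPathFrom_cons] at hγ
      rw [G.prefixList_seqFrom]
      rcases hmax j a hγ.1 with rfl | h
      · rcases ih (G.tgt (sel j)) t hγ.2 (by simpa using hlen) with h | h
        · left; rw [h]
        · right; exact List.Lex.cons h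
      · right; exact List.Lex.rel h

lemma seqFrom_lowest (sel : Fin N → G.Edge) (hsel : ∀ j, G.src (sel j) = j)
    (hmin : ∀ j e, G.src e = j → e = sel j ∨ G.elt (sel j) e) :
    ∀ (n : ℕ) (j : Fin N) (γ : List G.Edge), G.toGIFS.IsPathFrom j γ → γ.length = n →
      γ = prefixList (fun k => G.seqFrom sel k j) n ∨
        List.Lex G.elt (prefixList (fun k => G.seqFrom sel k j) n) γ := by
  intro n
  induction n with
  | zero =>
    intro j γ _ hlen
    left; exact List.eq_nil_of_length_eq_zero hlen
  | succ n ih =>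
    intro j γ hγ hlen
    cases γ with
    | nil => simp at hlen
    | cons a t =>
      rw [G.isPathFrom_cons] at hγ
      rw [G.prefixList_seqFrom]
      rcases hmin j a hγ.1 with rfl | h
      · rcases ih (G.tgt (sel j)) t hγ.2 (by simpa using hlen) with h | h
        · left; rw [h]
        · right; exact List.Lex.cons h
      · right; exact List.Lex.rel h

lemma exists_highest (hsrc : ∀ j : Fin N, ∃ e : G.Edge, G.src e = j) (i : Fin N) :
    ∃ ω : G.toGIFS.InfPath i, G.IsHighest i ω := by
  choose sel hsel hmax using G.exists_src hsrc
  refine ⟨⟨fun k => G.seqFrom sel k i, ?_, fun n => G.seqFrom_src sel hsel n i⟩, ?_⟩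
  · show G.src (G.seqFrom sel 0 i) = i; exact hsel i
  · intro n γ hγ hlen
    exact G.seqFrom_highest sel hsel hmax n i γ hγ hlen

lemma exists_lowest (hsrc : ∀ j : Fin N, ∃ e : G.Edge, G.src e = j) (i : Fin N) :
    ∃ ω : G.toGIFS.InfPath i, G.IsLowest i ω := by
  choose sel hsel hmin using G.exists_src_min hsrc
  refine ⟨⟨fun k => G.seqFrom sel k i, ?_, fun n => G.seqFrom_src sel hsel n i⟩, ?_⟩
  · show G.src (G.seqFrom sel 0 i) = i; exact hsel i
  · intro n γ hγ hlen
    exact G.seqFrom_lowest sel hsel hmin n i γ hγ hlen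

lemma exists_path_len (hsrc : ∀ j : Fin N, ∃ e : G.Edge, G.src e = j) (m : ℕ) (j : Fin N) :
    ∃ δ : List G.Edge, G.toGIFS.IsPathFrom j δ ∧ δ.length = m := by
  obtain ⟨ω, _⟩ := G.exists_highest hsrc j
  exact ⟨prefixList ω.1 m, G.isPathFrom_prefixList ω.2.1 ω.2.2 m, G.length_prefixList _ m⟩

/-! ### Projection point of an infinite path -/

lemma pathSet_antitone {E : Fin N → Set X} (hE : G.toGIFS.IsInvariant E)
    {i : Fin N} (ω : G.toGIFS.InfPath i) (n : ℕ) :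
    G.toGIFS.pathSet E i (prefixList ω.1 (n + 1)) ⊆ G.toGIFS.pathSet E i (prefixList ω.1 n) := by
  rw [G.prefixList_succ']
  unfold GIFS.pathSet
  rw [G.pathMap_append, G.pathTgt_append_cons]
  rw [Set.image_comp]
  apply Set.image_mono
  have h1 : G.toGIFS.pathMap [ω.1 n] '' E (G.toGIFS.pathTgt (G.tgt (ω.1 n)) []) =
      G.g (ω.1 n) '' E (G.tgt (ω.1 n)) := rfl
  rw [h1]
  have h2 : G.g (ω.1 n) '' E (G.tgt (ω.1 n)) ⊆ E (G.src (ω.1 n)) := by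
    rw [hE.2.2 (G.src (ω.1 n))]
    exact Set.subset_biUnion_of_mem (u := fun e => G.g e '' E (G.tgt e)) rfl
  rw [G.pathTgt_prefixList ω.2.1 ω.2.2]
  exact h2

lemma exists_proj {E : Fin N → Set X} (hE : G.toGIFS.IsInvariant E)
    {i : Fin N} (ω : G.toGIFS.InfPath i) :
    ∃ a : X, ∀ n : ℕ, a ∈ G.toGIFS.pathSet E i (prefixList ω.1 n) := by
  have hcomp : ∀ n, IsCompact (G.toGIFS.pathSet E i (prefixList ω.1 n)) := fun n =>
    ((hE.2.1 _).image (G.pathMap_continuous _))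
  have hne : ∀ n, (G.toGIFS.pathSet E i (prefixList ω.1 n)).Nonempty := fun n =>
    (hE.1 _).image _
  have h := IsCompact.nonempty_iInter_of_sequence_nonempty_isCompact_isClosed
    (fun n => G.toGIFS.pathSet E i (prefixList ω.1 n))
    (fun n => G.pathSet_antitone hE ω n) hne (hcomp 0) (fun n => (hcomp n).isClosed)
  obtain ⟨a, ha⟩ := h
  exact ⟨a, fun n => Set.mem_iInter.mp ha n⟩

lemma exists_tail {E : Fin N → Set X} (hE : G.toGIFS.IsInvariant E)
    (hsrc : ∀ j : Fin N, ∃ e : G.Edge, G.src e = j) (i : Fin N) :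
    ∃ b : X, G.IsTail E i b := by
  obtain ⟨ω, hω⟩ := G.exists_highest hsrc i
  obtain ⟨b, hb⟩ := G.exists_proj hE ω
  exact ⟨b, ω, hω, hb⟩

lemma exists_head {E : Fin N → Set X} (hE : G.toGIFS.IsInvariant E)
    (hsrc : ∀ j : Fin N, ∃ e : G.Edge, G.src e = j) (i : Fin N) :
    ∃ a : X, G.IsHead E i a := by
  obtain ⟨ω, hω⟩ := G.exists_lowest hsrc i
  obtain ⟨a, ha⟩ := G.exists_proj hE ω
  exact ⟨a, ω, hω, ha⟩

/-! ### Splitting Lex on equal-length lists -/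

lemma lex_eq_length_split :
    ∀ {γ ω : List G.Edge}, List.Lex G.elt γ ω → γ.length = ω.length →
      ∃ (η : List G.Edge) (e f : G.Edge) (γ' ω' : List G.Edge),
        γ = η ++ e :: γ' ∧ ω = η ++ f :: ω' ∧ G.elt e f ∧ γ'.length = ω'.length := by
  intro γ ω h
  induction h with
  | nil => intro hlen; simp at hlen
  | @rel a l₁ b l₂ hab =>
    intro hlen
    exact ⟨[], a, b, l₁, l₂, rfl, rfl, hab, by simpa using hlen⟩
  | @cons a l₁ l₂ h ih =>
    intro hlen
    obtain ⟨η, e, f, γ', ω', h1, h2, h3, h4⟩ := ih (by simpa using hlen)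
    exact ⟨a :: η, e, f, γ', ω', by rw [h1]; rfl, by rw [h2]; rfl, h3, h4⟩

end OGIFS

end Aux

noncomputable section
/-- **Theorem 1.2.** An ordered GIFS is a linear GIFS if and only if it satisfies
the chain condition. -/
theorem linear_iff_chainCondition {d N : ℕ}
    (G : OGIFS (EuclideanSpace ℝ (Fin d)) N) (E : Fin N → Set (EuclideanSpace ℝ (Fin d)))
    (hE : G.toGIFS.IsInvariant E) :
    G.IsLinear E ↔ G.ChainCondition E := by
  classical
  have hsrc : ∀ j : Fin N, ∃ e : G.Edge, G.src e = j := by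
    intro j
    obtain ⟨x, hx⟩ := hE.1 j
    rw [hE.2.2 j] at hx
    simp only [Set.mem_iUnion, Set.mem_setOf_eq] at hx
    obtain ⟨e, he, -⟩ := hx
    exact ⟨e, he⟩
  constructor
  · -- linear → chain condition
    intro hlin e f hadj b a hb ha
    obtain ⟨hef, hno⟩ := hadj
    obtain ⟨ωt, hωt, hbmem⟩ := hb
    obtain ⟨ωh, hωh, hamem⟩ := ha
    have hadjn : ∀ n : ℕ,
        G.Adjacent (G.src e) (e :: prefixList ωt.1 n) (f :: prefixList ωh.1 n) := by
      intro n
      refine ⟨?_, ?_, ?_, List.Lex.rel hef, ?_⟩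
      · rw [G.isPathFrom_cons]
        exact ⟨rfl, G.isPathFrom_prefixList ωt.2.1 ωt.2.2 n⟩
      · rw [G.isPathFrom_cons]
        exact ⟨(G.elt_src hef).symm, G.isPathFrom_prefixList ωh.2.1 ωh.2.2 n⟩
      · simp [G.length_prefixList]
      · rintro ⟨η, hη, hηlen, h1, h2⟩
        cases η with
        | nil => simp at hηlen
        | cons c η' =>
          rw [G.isPathFrom_cons] at hη
          have hη'len : η'.length = n := by
            simpa [G.length_prefixList] using hηlen
          cases h1 with
          | rel h1' =>
            cases h2 with
            | rel h2' => exact hno ⟨c, h1', h2'⟩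
            | cons h2' =>
              rcases hωh n η' hη.2 hη'len with h | h
              · rw [h] at h2'; exact G.lex_irrefl _ h2'
              · exact G.lex_asymm h h2'
          | cons h1' =>
            rcases hωt n η' hη.2 hη'len with h | h
            · rw [h] at h1'; exact G.lex_irrefl _ h1'
            · exact G.lex_asymm h1' h
    have hgeb : ∀ n, G.g e b ∈ G.toGIFS.pathSet E (G.src e) (e :: prefixList ωt.1 n) := by
      intro n
      have := G.mem_pathSet_extend (hbmem n) (G.src e) []
      simpa [GIFS.pathMap] using this
    have hgfa : ∀ n, G.g f a ∈ G.toGIFS.pathSet E (G.src e) (f :: prefixList ωh.1 n) := by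
      intro n
      have := G.mem_pathSet_extend (hamem n) (G.src e) []
      simpa [GIFS.pathMap] using this
    have hEdgeNe : (Finset.univ : Finset G.Edge).Nonempty := ⟨e, Finset.mem_univ e⟩
    set R := Finset.univ.sup' hEdgeNe G.r with hRdef
    have hR1 : R < 1 := (Finset.sup'_lt_iff hEdgeNe).mpr fun e' _ => G.r_lt_one e'
    have hR0 : 0 ≤ R := le_trans (G.r_pos e).le (Finset.le_sup' G.r (Finset.mem_univ e))
    have hrR : ∀ e', G.r e' ≤ R := fun e' => Finset.le_sup' G.r (Finset.mem_univ e')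
    have hFinNe : (Finset.univ : Finset (Fin N)).Nonempty := ⟨G.src e, Finset.mem_univ _⟩
    set D := Finset.univ.sup' hFinNe (fun j => Metric.diam (E j)) with hDdef
    have hD : ∀ j, Metric.diam (E j) ≤ D := fun j =>
      Finset.le_sup' (fun j => Metric.diam (E j)) (Finset.mem_univ j)
    have hD0 : 0 ≤ D := le_trans Metric.diam_nonneg (hD (G.src e))
    have hbound : ∀ (γ : List G.Edge) (n : ℕ) (x y : EuclideanSpace ℝ (Fin d)),
        γ.length = n → x ∈ G.toGIFS.pathSet E (G.src e) γ →
        y ∈ G.toGIFS.pathSet E (G.src e) γ → dist x y ≤ R ^ n * D := by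
      rintro γ n x y hn ⟨u, hu, rfl⟩ ⟨v, hv, rfl⟩
      rw [G.dist_pathMap]
      calc (γ.map G.r).prod * dist u v ≤ R ^ n * dist u v := by
            rw [← hn]
            exact mul_le_mul_of_nonneg_right (G.prod_map_r_le_pow hR0 hrR γ) dist_nonneg
        _ ≤ R ^ n * D := by
            refine mul_le_mul_of_nonneg_left ?_ (pow_nonneg hR0 n)
            exact le_trans
              (Metric.dist_le_diam_of_mem (hE.2.1 _).isBounded hu hv) (hD _)
    have key : ∀ n : ℕ, dist (G.g e b) (G.g f a) ≤ 2 * (R ^ (n + 1) * D) := by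
      intro n
      obtain ⟨z, hz1, hz2⟩ := hlin (G.src e) _ _ (hadjn n)
      have h1 : dist (G.g e b) z ≤ R ^ (n + 1) * D :=
        hbound _ (n + 1) _ _ (by simp [G.length_prefixList]) (hgeb n) hz1
      have h2 : dist z (G.g f a) ≤ R ^ (n + 1) * D :=
        hbound _ (n + 1) _ _ (by simp [G.length_prefixList]) hz2 (hgfa n)
      calc dist (G.g e b) (G.g f a) ≤ dist (G.g e b) z + dist z (G.g f a) := dist_triangle _ _ _
        _ ≤ 2 * (R ^ (n + 1) * D) := by linarith
    have hlim : Filter.Tendsto (fun n : ℕ => 2 * (R ^ (n + 1) * D)) Filter.atTop (nhds 0) := by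
      have h1 : Filter.Tendsto (fun n : ℕ => R ^ (n + 1)) Filter.atTop (nhds 0) :=
        (tendsto_pow_atTop_nhds_zero_of_lt_one hR0 hR1).comp (Filter.tendsto_add_atTop_nat 1)
      have := (h1.mul_const D).const_mul 2
      simpa using this
    have hdle : dist (G.g e b) (G.g f a) ≤ 0 := ge_of_tendsto' hlim key
    exact dist_le_zero.mp hdle
  · -- chain condition → linear
    intro hch i γ ω hadj
    obtain ⟨hγ, hω, hlen, hlex, hno⟩ := hadj
    obtain ⟨η, e, f, γ', ω', rfl, rfl, hef, hlen'⟩ := G.lex_eq_length_split hlex hlen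
    rw [G.isPathFrom_append, G.isPathFrom_cons] at hγ hω
    obtain ⟨hγη, hesrc, hγ'⟩ := hγ
    obtain ⟨-, hfsrc, hω'⟩ := hω
    have hbet : ∀ (c : G.Edge) (δ : List G.Edge), G.src c = G.src e →
        G.toGIFS.IsPathFrom (G.tgt c) δ → δ.length = γ'.length →
        G.toGIFS.IsPathFrom i (η ++ c :: δ) ∧
          (η ++ c :: δ).length = (η ++ e :: γ').length := by
      intro c δ hc hδ hδl
      constructor
      · rw [G.isPathFrom_append, G.isPathFrom_cons]
        exact ⟨hγη, hc.trans hesrc, hδ⟩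
      · simp [hδl]
    have hadjef : G.AdjacentEdges e f := by
      refine ⟨hef, ?_⟩
      rintro ⟨e', h1, h2⟩
      obtain ⟨δ, hδ, hδl⟩ := G.exists_path_len hsrc γ'.length (G.tgt e')
      obtain ⟨hp, hl⟩ := hbet e' δ (G.elt_src h1).symm hδ hδl
      exact hno ⟨η ++ e' :: δ, hp, hl,
        G.lex_append_left η (List.Lex.rel h1), G.lex_append_left η (List.Lex.rel h2)⟩
    have hγ'high : ∀ δ, G.toGIFS.IsPathFrom (G.tgt e) δ → δ.length = γ'.length →
        δ = γ' ∨ List.Lex G.elt δ γ' := by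
      intro δ hδ hδl
      rcases G.path_trichotomy δ γ' (G.tgt e) hδ hγ' hδl with h | h | h
      · exact Or.inl h
      · exact Or.inr h
      · exfalso
        obtain ⟨hp, hl⟩ := hbet e δ rfl hδ hδl
        refine hno ⟨η ++ e :: δ, hp, hl, ?_, G.lex_append_left η (List.Lex.rel hef)⟩
        rw [List.append_cons η e γ', List.append_cons η e δ]
        exact G.lex_append_left (η ++ [e]) h
    have hω'low : ∀ δ, G.toGIFS.IsPathFrom (G.tgt f) δ → δ.length = ω'.length →
        δ = ω' ∨ List.Lex G.elt ω' δ := by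
      intro δ hδ hδl
      rcases G.path_trichotomy δ ω' (G.tgt f) hδ hω' hδl with h | h | h
      · exact Or.inl h
      · exfalso
        obtain ⟨hp, hl⟩ := hbet f δ (G.elt_src hef).symm hδ (hδl.trans hlen'.symm)
        refine hno ⟨η ++ f :: δ, hp, hl, G.lex_append_left η (List.Lex.rel hef), ?_⟩
        rw [List.append_cons η f ω', List.append_cons η f δ]
        exact G.lex_append_left (η ++ [f]) h
      · exact Or.inr h
    obtain ⟨b, ωt, hωtH, hbmem⟩ := G.exists_tail hE hsrc (G.tgt e)
    obtain ⟨a, ωh, hωhL, hamem⟩ := G.exists_head hE hsrc (G.tgt f)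
    have hgba : G.g e b = G.g f a := hch e f hadjef b a ⟨ωt, hωtH, hbmem⟩ ⟨ωh, hωhL, hamem⟩
    have hpfxt : γ' = prefixList ωt.1 γ'.length := by
      rcases hωtH γ'.length γ' hγ' rfl with h | h
      · exact h
      · exfalso
        have hp := G.isPathFrom_prefixList ωt.2.1 ωt.2.2 γ'.length
        rcases hγ'high _ hp (G.length_prefixList _ _) with h' | h'
        · rw [h'] at h; exact G.lex_irrefl _ h
        · exact G.lex_asymm h h'
    have hpfxh : ω' = prefixList ωh.1 ω'.length := by
      rcases hωhL ω'.length ω' hω' rfl with h | h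
      · exact h
      · exfalso
        have hp := G.isPathFrom_prefixList ωh.2.1 ωh.2.2 ω'.length
        rcases hω'low _ hp (G.length_prefixList _ _) with h' | h'
        · rw [h'] at h; exact G.lex_irrefl _ h
        · exact G.lex_asymm h h'
    refine ⟨G.toGIFS.pathMap η (G.g e b), ?_, ?_⟩
    · have hb' : b ∈ G.toGIFS.pathSet E (G.tgt e) γ' := by
        rw [hpfxt]; exact hbmem _
      exact G.mem_pathSet_extend hb' i η
    · rw [hgba]
      have ha' : a ∈ G.toGIFS.pathSet E (G.tgt f) ω' := by
        rw [hpfxh]; exact hamem _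
      exact G.mem_pathSet_extend ha' i η
end
end

section
/- An ordered IFS {S_1,…,S_N} of contracting similitudes on ℝ^d with invariant set K is a linear IFS if and only if S_{i+1}(Fix(S_1)) = S_i(Fix(S_N)) for every i = 1,2,…,N−1, where Fix(S) denotes the unique fixed point of the contraction S. -/
open MeasureTheory Set

noncomputable section
/-- Composition `S_{ω₁} ∘ ⋯ ∘ S_{ω_k}` along a finite word. -/
def wordMap {α X : Type} (S : α → X → X) (ω : List α) : X → X :=
  ω.foldr (fun a f => S a ∘ f) id

/-- Two same-length words over `Fin N` adjacent (consecutive) in the dictionary order. -/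
def AdjacentWords {N : ℕ} (ω γ : List (Fin N)) : Prop :=
  ω.length = γ.length ∧ List.Lex (· < ·) ω γ ∧
  ¬ ∃ η : List (Fin N), η.length = ω.length ∧ List.Lex (· < ·) ω η ∧ List.Lex (· < ·) η γ
section Aux
variable {N : ℕ}

lemma myLex_append_left {α : Type} {r : α → α → Prop} (τ : List α) {s t : List α}
    (h : List.Lex r s t) : List.Lex r (τ ++ s) (τ ++ t) := by
  induction τ with
  | nil => simpa
  | cons a τ ih => exact List.Lex.cons ih

lemma my_not_lex_bot (hN : 0 < N) :
    ∀ l : List (Fin N), ¬ List.Lex (· < ·) l (List.replicate l.length ⟨0, hN⟩) := by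
  intro l
  induction l with
  | nil => intro h; cases h
  | cons a t ih =>
    intro h
    rw [List.length_cons, List.replicate_succ] at h
    cases h with
    | cons h' => exact ih h'
    | rel h' => simp [Fin.lt_def] at h'

lemma my_not_top_lex (hN : 0 < N) :
    ∀ l : List (Fin N),
      ¬ List.Lex (· < ·) (List.replicate l.length ⟨N - 1, Nat.sub_lt hN Nat.one_pos⟩) l := by
  intro l
  induction l with
  | nil => intro h; cases h
  | cons a t ih =>
    intro h
    rw [List.length_cons, List.replicate_succ] at h
    cases h with
    | cons h' => exact ih h'
    | rel h' => have := a.isLt; rw [Fin.lt_def] at h'; simp at h'; omega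

lemma my_lex_decomp : ∀ {ω γ : List (Fin N)}, ω.length = γ.length →
    List.Lex (· < ·) ω γ →
    ∃ (τ : List (Fin N)) (a b : Fin N) (s t : List (Fin N)),
      ω = τ ++ a :: s ∧ γ = τ ++ b :: t ∧ a < b ∧ s.length = t.length := by
  intro ω γ hlen h
  induction h with
  | nil => simp at hlen
  | @cons a l1 l2 h ih =>
    obtain ⟨τ, x, y, s, t, h1, h2, h3, h4⟩ := ih (by simpa using hlen)
    exact ⟨a :: τ, x, y, s, t, by simp [h1], by simp [h2], h3, h4⟩
  | @rel a l1 b l2 hab =>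
    exact ⟨[], a, b, l1, l2, rfl, rfl, hab, by simpa using hlen⟩

lemma my_exists_gt (hN : 0 < N) : ∀ l : List (Fin N),
    l ≠ List.replicate l.length ⟨N - 1, Nat.sub_lt hN Nat.one_pos⟩ →
    ∃ l', l'.length = l.length ∧ List.Lex (· < ·) l l' := by
  intro l
  induction l with
  | nil => simp
  | cons a t ih =>
    intro hne
    by_cases ha : a.val < N - 1
    · exact ⟨⟨N - 1, Nat.sub_lt hN Nat.one_pos⟩ :: t, by simp,
        List.Lex.rel (by rw [Fin.lt_def]; exact ha)⟩
    · have haa : a = ⟨N - 1, Nat.sub_lt hN Nat.one_pos⟩ := Fin.ext (by have := a.isLt; simp; omega)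
      have ht : t ≠ List.replicate t.length ⟨N - 1, Nat.sub_lt hN Nat.one_pos⟩ := by
        intro h
        apply hne
        rw [List.length_cons, List.replicate_succ, ← h, haa]
      obtain ⟨t', h1, h2⟩ := ih ht
      exact ⟨a :: t', by simp [h1], List.Lex.cons h2⟩

lemma my_exists_lt (hN : 0 < N) : ∀ l : List (Fin N),
    l ≠ List.replicate l.length ⟨0, hN⟩ →
    ∃ l', l'.length = l.length ∧ List.Lex (· < ·) l' l := by
  intro l
  induction l with
  | nil => simp
  | cons a t ih =>
    intro hne
    by_cases ha : 0 < a.val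
    · exact ⟨⟨0, hN⟩ :: t, by simp, List.Lex.rel (by rw [Fin.lt_def]; exact ha)⟩
    · have hv : a.val = 0 := by omega
      have haa : a = ⟨0, hN⟩ := Fin.ext (by simp [hv])
      have ht : t ≠ List.replicate t.length ⟨0, hN⟩ := by
        intro h
        apply hne
        rw [List.length_cons, List.replicate_succ, ← h, haa]
      obtain ⟨t', h1, h2⟩ := ih ht
      exact ⟨a :: t', by simp [h1], List.Lex.cons h2⟩

end Aux

lemma my_wordMap_append {α X : Type} (S : α → X → X) (l1 l2 : List α) (x : X) :
    wordMap S (l1 ++ l2) x = wordMap S l1 (wordMap S l2 x) := by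
  induction l1 with
  | nil => rfl
  | cons a t ih => simp only [List.cons_append, wordMap]; simp [wordMap] at ih ⊢; rw [ih]

lemma my_wordMap_replicate_fix {α X : Type} (S : α → X → X) (a : α) (x : X)
    (hx : S a x = x) : ∀ k, wordMap S (List.replicate k a) x = x := by
  intro k
  induction k with
  | zero => rfl
  | succ k ih =>
    rw [List.replicate_succ]
    show S a (wordMap S (List.replicate k a) x) = x
    rw [ih, hx]

lemma my_dist_wordMap_replicate {α X : Type} [MetricSpace X] (S : α → X → X) (r : α → ℝ)
    (hS : ∀ a x y, dist (S a x) (S a y) = r a * dist x y) (a : α) (x y : X) :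
    ∀ k, dist (wordMap S (List.replicate k a) x) (wordMap S (List.replicate k a) y)
      = r a ^ k * dist x y := by
  intro k
  induction k with
  | zero => simp [wordMap]
  | succ k ih =>
    rw [List.replicate_succ]
    show dist (S a (wordMap S (List.replicate k a) x)) (S a (wordMap S (List.replicate k a) y)) = _
    rw [hS, ih, pow_succ]; ring

lemma my_fix_mem {X : Type} [MetricSpace X] (f : X → X) (c : ℝ) (hc0 : 0 ≤ c) (hc1 : c < 1)
    (hf : ∀ x y, dist (f x) (f y) = c * dist x y)
    (K : Set X) (hK : K.Nonempty) (hKc : IsClosed K) (hsub : f '' K ⊆ K)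
    (p : X) (hp : f p = p) : p ∈ K := by
  obtain ⟨x, hx⟩ := hK
  have hmem : ∀ n, f^[n] x ∈ K := by
    intro n
    induction n with
    | zero => simpa
    | succ n ih => rw [Function.iterate_succ_apply']; exact hsub ⟨_, ih, rfl⟩
  have hdist : ∀ n, dist (f^[n] x) p = c ^ n * dist x p := by
    intro n
    induction n with
    | zero => simp
    | succ n ih =>
      rw [Function.iterate_succ_apply']
      nth_rewrite 1 [← hp]
      rw [hf, ih, pow_succ]; ring
  have htd : Filter.Tendsto (fun n => f^[n] x) Filter.atTop (nhds p) := by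
    rw [tendsto_iff_dist_tendsto_zero]
    simp only [hdist]
    have := (tendsto_pow_atTop_nhds_zero_of_lt_one hc0 hc1).mul_const (dist x p)
    simpa using this
  exact hKc.mem_of_tendsto htd (Filter.Eventually.of_forall hmem)


/-- **Corollary 4.2 (Hata's condition).** An ordered IFS `{S_1, …, S_N}` is a linear
IFS if and only if `S_{i+1}(Fix(S_1)) = S_i(Fix(S_N))` for `i = 1, …, N-1`. -/
theorem orderedIFS_linear_iff_fix {d N : ℕ} (hN : 0 < N)
    (S : Fin N → EuclideanSpace ℝ (Fin d) → EuclideanSpace ℝ (Fin d)) (r : Fin N → ℝ)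
    (hr : ∀ i, 0 < r i ∧ r i < 1)
    (hS : ∀ i x y, dist (S i x) (S i y) = r i * dist x y)
    (K : Set (EuclideanSpace ℝ (Fin d))) (hK : K.Nonempty) (hKc : IsCompact K)
    (hKinv : K = ⋃ i, S i '' K)
    (p q : EuclideanSpace ℝ (Fin d)) (hp : S ⟨0, hN⟩ p = p) (hq : S ⟨N - 1, Nat.sub_lt hN Nat.one_pos⟩ q = q) :
    (∀ ω γ : List (Fin N), AdjacentWords ω γ →
        ((wordMap S ω '' K) ∩ (wordMap S γ '' K)).Nonempty) ↔
    (∀ i : Fin N, ∀ h : i.val + 1 < N, S ⟨i.val + 1, h⟩ p = S i q) := by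
  set bot : Fin N := ⟨0, hN⟩ with hbot
  set top : Fin N := ⟨N - 1, Nat.sub_lt hN Nat.one_pos⟩ with htop
  have hsubK : ∀ i : Fin N, S i '' K ⊆ K := by
    intro i
    conv_rhs => rw [hKinv]
    exact Set.subset_iUnion (fun j => S j '' K) i
  have hp' : p ∈ K := my_fix_mem (S bot) (r bot) (le_of_lt (hr bot).1) (hr bot).2
    (hS bot) K hK hKc.isClosed (hsubK bot) p hp
  have hq' : q ∈ K := my_fix_mem (S top) (r top) (le_of_lt (hr top).1) (hr top).2
    (hS top) K hK hKc.isClosed (hsubK top) q hq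
  set D := Metric.diam K with hD
  constructor
  · intro hlin i h
    set b : Fin N := ⟨i.val + 1, h⟩ with hb
    have key : ∀ k : ℕ,
        dist (S b p) (S i q) ≤ r b * (r bot ^ k * D) + r i * (r top ^ k * D) := by
      intro k
      have hadj : AdjacentWords (i :: List.replicate k top) (b :: List.replicate k bot) := by
        refine ⟨by simp, List.Lex.rel (by rw [Fin.lt_def]; simp [hb]), ?_⟩
        rintro ⟨η, hl, h1, h2⟩
        cases η with
        | nil => cases h1
        | cons h' t' =>
          have hlt' : t'.length = k := by simpa using hl
          cases h1 with
          | cons hc =>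
            rw [← hlt'] at hc
            exact my_not_top_lex hN t' hc
          | rel hrel =>
            cases h2 with
            | cons hc =>
              rw [← hlt'] at hc
              exact my_not_lex_bot hN t' hc
            | rel hrel2 =>
              rw [Fin.lt_def] at hrel hrel2
              simp [hb] at hrel2
              omega
      obtain ⟨x, hx1, hx2⟩ := hlin _ _ hadj
      obtain ⟨y, hy, hyx⟩ := hx1
      obtain ⟨z, hz, hzx⟩ := hx2
      have hxy : x = S i (wordMap S (List.replicate k top) y) := hyx.symm
      have hxz : x = S b (wordMap S (List.replicate k bot) z) := hzx.symm
      have h1 : dist x (S i q) ≤ r i * (r top ^ k * D) := by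
        rw [hxy, hS]
        have : dist (wordMap S (List.replicate k top) y) q
            = r top ^ k * dist y q := by
          nth_rewrite 1 [← my_wordMap_replicate_fix S top q hq k]
          exact my_dist_wordMap_replicate S r hS top y q k
        rw [this]
        have hdy : dist y q ≤ D := Metric.dist_le_diam_of_mem hKc.isBounded hy hq'
        have h0 : (0:ℝ) ≤ r top ^ k := pow_nonneg (le_of_lt (hr top).1) k
        exact mul_le_mul_of_nonneg_left (mul_le_mul_of_nonneg_left hdy h0) (hr i).1.le
      have h2 : dist (S b p) x ≤ r b * (r bot ^ k * D) := by
        rw [hxz, hS]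
        have : dist p (wordMap S (List.replicate k bot) z)
            = r bot ^ k * dist p z := by
          nth_rewrite 1 [← my_wordMap_replicate_fix S bot p hp k]
          exact my_dist_wordMap_replicate S r hS bot p z k
        rw [this]
        have hdz : dist p z ≤ D := Metric.dist_le_diam_of_mem hKc.isBounded hp' hz
        have h0 : (0:ℝ) ≤ r bot ^ k := pow_nonneg (le_of_lt (hr bot).1) k
        exact mul_le_mul_of_nonneg_left (mul_le_mul_of_nonneg_left hdz h0) (hr b).1.le
      calc dist (S b p) (S i q) ≤ dist (S b p) x + dist x (S i q) := dist_triangle _ _ _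
        _ ≤ r b * (r bot ^ k * D) + r i * (r top ^ k * D) := add_le_add h2 h1
    have hlim : Filter.Tendsto
        (fun k : ℕ => r b * (r bot ^ k * D) + r i * (r top ^ k * D))
        Filter.atTop (nhds 0) := by
      have t1 := ((tendsto_pow_atTop_nhds_zero_of_lt_one (le_of_lt (hr bot).1)
        (hr bot).2).mul_const D).const_mul (r b)
      have t2 := ((tendsto_pow_atTop_nhds_zero_of_lt_one (le_of_lt (hr top).1)
        (hr top).2).mul_const D).const_mul (r i)
      simpa using t1.add t2
    have hle : dist (S b p) (S i q) ≤ 0 :=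
      ge_of_tendsto hlim (Filter.Eventually.of_forall key)
    exact dist_le_zero.mp hle
  · intro hfix ω γ hadj
    obtain ⟨hlen, hlex, hbet⟩ := hadj
    obtain ⟨τ, a, b, s, t, hω, hγ, hab, hst⟩ := my_lex_decomp hlen hlex
    have hbv : b.val = a.val + 1 := by
      by_contra hc
      have h1 : a.val + 1 < b.val := by rw [Fin.lt_def] at hab; omega
      have hc1 : a.val + 1 < N := lt_trans h1 b.isLt
      exact hbet ⟨τ ++ (⟨a.val + 1, hc1⟩ : Fin N) :: List.replicate t.length bot,
        by simp [hω, hst],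
        by rw [hω]; exact myLex_append_left τ (List.Lex.rel (by rw [Fin.lt_def]; simp)),
        by rw [hγ]; exact myLex_append_left τ (List.Lex.rel (by rw [Fin.lt_def]; simpa))⟩
    have hs : s = List.replicate s.length top := by
      by_contra hc
      obtain ⟨s', h1, h2⟩ := my_exists_gt hN s hc
      exact hbet ⟨τ ++ a :: s', by simp [hω, h1],
        by rw [hω]; exact myLex_append_left τ (List.Lex.cons h2),
        by rw [hγ]; exact myLex_append_left τ (List.Lex.rel hab)⟩
    have ht : t = List.replicate t.length bot := by
      by_contra hc
      obtain ⟨t', h1, h2⟩ := my_exists_lt hN t hc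
      exact hbet ⟨τ ++ b :: t', by simp [hω, h1, hst],
        by rw [hω]; exact myLex_append_left τ (List.Lex.rel hab),
        by rw [hγ]; exact myLex_append_left τ (List.Lex.cons h2)⟩
    have hSb : S b p = S a q := by
      have hb2 : b = ⟨a.val + 1, by rw [← hbv]; exact b.isLt⟩ := Fin.ext (by simp [hbv])
      rw [hb2]
      exact hfix a _
    refine ⟨wordMap S τ (S a q), ⟨q, hq', ?_⟩, ⟨p, hp', ?_⟩⟩
    · rw [hω, my_wordMap_append]
      congr 1
      show S a (wordMap S s q) = S a q
      rw [hs, my_wordMap_replicate_fix S top q hq]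
    · rw [hγ, my_wordMap_append]
      congr 1
      show S b (wordMap S t p) = S a q
      rw [ht, my_wordMap_replicate_fix S bot p hp, hSb]
end
end

section
/- Let Φ = {φ_1,…,φ_n} be a path-on-lattice IFS with respect to a path from 0 to d, and consider its associated two-state ordered GIFS with invariant sets (E_1, E_{−1}). Then the head of E_1 is 0 and the tail of E_1 is d, while the head of E_{−1} is d and the tail of E_{−1} is 0. -/
open MeasureTheory Set

noncomputable section
/-- The similitudes of a path-on-lattice IFS: `w ↦ αw + β` or `w ↦ α w̄ + β`. -/
def φfun (a b : ℂ) (c : Bool) : ℂ → ℂ :=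
  fun w => cond c (a * (starRingEnd ℂ) w + b) (a * w + b)

lemma φfun_dist (a b : ℂ) (c : Bool) (x y : ℂ) :
    dist (φfun a b c x) (φfun a b c y) = ‖a‖ * dist x y := by
  cases c
  · show dist (a * x + b) (a * y + b) = _
    rw [Complex.dist_eq, Complex.dist_eq,
      show a * x + b - (a * y + b) = a * (x - y) by ring, norm_mul]
  · show dist (a * (starRingEnd ℂ) x + b) (a * (starRingEnd ℂ) y + b) = _
    rw [Complex.dist_eq, Complex.dist_eq,
      show a * (starRingEnd ℂ) x + b - (a * (starRingEnd ℂ) y + b)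
          = a * ((starRingEnd ℂ) x - (starRingEnd ℂ) y) by ring,
      norm_mul, ← map_sub, Complex.norm_conj]

/-- A path-on-lattice IFS: a path `0 = z₀, z₁, …, z_n = d` of unit steps on the square
or triangular lattice, together with contracting similitudes `φ_k` (each of the form
`αz+β` or `αz̄+β`) such that `φ_k({0,d}) = {z_{k-1}, z_k}`. -/
structure PathOnLattice (n : ℕ) where
  z : Fin (n + 1) → ℂ
  hz0 : z 0 = 0
  lat : (∀ k, ∃ a b : ℤ, z k = (a : ℂ) + (b : ℂ) * Complex.I) ∨
        (∀ k, ∃ a b : ℤ, z k = (a : ℂ) + (b : ℂ) * Complex.exp (2 * Real.pi * Complex.I / 3))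
  hstep : ∀ k : Fin n, ‖z k.succ - z k.castSucc‖ = 1
  α : Fin n → ℂ
  β : Fin n → ℂ
  cj : Fin n → Bool
  hcontr : ∀ k, 0 < ‖α k‖ ∧ ‖α k‖ < 1
  hends : ∀ k : Fin n,
      (φfun (α k) (β k) (cj k) 0 = z k.castSucc ∧
        φfun (α k) (β k) (cj k) (z (Fin.last n)) = z k.succ) ∨
      (φfun (α k) (β k) (cj k) 0 = z k.succ ∧
        φfun (α k) (β k) (cj k) (z (Fin.last n)) = z k.castSucc)

namespace PathOnLattice

variable {n : ℕ} (Φ : PathOnLattice n)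

/-- The maps of the path-on-lattice IFS. -/
def φ (k : Fin n) : ℂ → ℂ := φfun (Φ.α k) (Φ.β k) (Φ.cj k)

/-- The endpoint `d` of the path. -/
def dd : ℂ := Φ.z (Fin.last n)

/-- `v_k = 1`, i.e. `(φ_k(0), φ_k(d)) = (z_{k-1}, z_k)`. -/
def vpos (k : Fin n) : Prop := Φ.φ k 0 = Φ.z k.castSucc

open Classical in
/-- The two-state ordered GIFS associated to a path-on-lattice IFS: state `0` stands
for the state `1` (with equation `E_1 = φ_1(E_{v_1}) + ⋯ + φ_n(E_{v_n})`) and state `1`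
stands for the state `-1` (with equation `E_{-1} = φ_n(E_{-v_n}) + ⋯ + φ_1(E_{-v_1})`);
the edges from state `1` are ordered by increasing `k`, those from state `-1` by
decreasing `k`. -/
def gifs : OGIFS ℂ 2 where
  Edge := Fin 2 × Fin n
  fintypeEdge := inferInstance
  src e := e.1
  tgt e := if e.1 = 0 then (if Φ.vpos e.2 then 0 else 1) else (if Φ.vpos e.2 then 1 else 0)
  r e := ‖Φ.α e.2‖
  r_pos e := (Φ.hcontr e.2).1
  r_lt_one e := (Φ.hcontr e.2).2
  g e := Φ.φ e.2
  g_sim e x y := φfun_dist _ _ _ x y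
  elt e f := e.1 = f.1 ∧ ((e.1 = 0 ∧ e.2 < f.2) ∨ (e.1 ≠ 0 ∧ f.2 < e.2))
  elt_src h := h.1
  elt_irrefl a h := by
    rcases h.2 with ⟨_, hl⟩ | ⟨_, hl⟩ <;> exact lt_irrefl _ hl
  elt_trans {a b c} hab hbc := by
    obtain ⟨h1, hab'⟩ := hab
    obtain ⟨h2, hbc'⟩ := hbc
    refine ⟨h1.trans h2, ?_⟩
    rcases hab' with ⟨ha0, hlt⟩ | ⟨ha0, hlt⟩
    · rcases hbc' with ⟨_, hlt'⟩ | ⟨hb0, hlt'⟩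
      · exact Or.inl ⟨ha0, hlt.trans hlt'⟩
      · exact absurd (h1 ▸ ha0) hb0
    · rcases hbc' with ⟨hb0, hlt'⟩ | ⟨_, hlt'⟩
      · exact absurd (h1 ▸ ha0) (fun hh => hh hb0)
      · exact Or.inr ⟨ha0, hlt'.trans hlt⟩
  elt_total a b hsrc := by
    have hab : a.1 = b.1 := hsrc
    rcases lt_trichotomy a.2 b.2 with h | h | h
    · by_cases ha : a.1 = 0
      · exact Or.inl ⟨hab, Or.inl ⟨ha, h⟩⟩
      · exact Or.inr (Or.inr ⟨hab.symm, Or.inr ⟨fun hb => ha (hab.trans hb), h⟩⟩)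
    · exact Or.inr (Or.inl (Prod.ext hab h))
    · by_cases ha : a.1 = 0
      · exact Or.inr (Or.inr ⟨hab.symm, Or.inl ⟨hab.symm.trans ha, h⟩⟩)
      · exact Or.inl ⟨hab, Or.inr ⟨ha, h⟩⟩

end PathOnLattice

section AuxHeadTail

namespace GIFS

variable {X : Type} [MetricSpace X] {N : ℕ} (G : GIFS X N)

lemma pathTgt_cons' (i : Fin N) (e : G.Edge) (γ : List G.Edge) :
    G.pathTgt i (e :: γ) = G.pathTgt (G.tgt e) γ := by
  cases γ with
  | nil => rfl
  | cons f γ =>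
    show ((e :: f :: γ).getLast?).elim i G.tgt = ((f :: γ).getLast?).elim (G.tgt e) G.tgt
    rw [List.getLast?_cons_cons]
    obtain ⟨a, ha⟩ := Option.isSome_iff_exists.mp
      (List.getLast?_isSome.mpr (List.cons_ne_nil f γ))
    rw [ha]
    rfl

lemma pathMap_cons' (e : G.Edge) (γ : List G.Edge) :
    G.pathMap (e :: γ) = G.g e ∘ G.pathMap γ := rfl

lemma pathSet_nil' (E : Fin N → Set X) (i : Fin N) : G.pathSet E i [] = E i := by
  simp [pathSet, pathMap, pathTgt]

lemma pathSet_cons' (E : Fin N → Set X) (i : Fin N) (e : G.Edge) (γ : List G.Edge) :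
    G.pathSet E i (e :: γ) = G.g e '' G.pathSet E (G.tgt e) γ := by
  rw [pathSet, pathMap_cons', pathTgt_cons', Set.image_comp, pathSet]

lemma pathMap_dist_le (c : ℝ) (hc0 : 0 ≤ c) (hcr : ∀ e, G.r e ≤ c) :
    ∀ (γ : List G.Edge) (x y : X),
      dist (G.pathMap γ x) (G.pathMap γ y) ≤ c ^ γ.length * dist x y := by
  intro γ
  induction γ with
  | nil => intro x y; simp [pathMap]
  | cons e γ ih =>
    intro x y
    rw [pathMap_cons']
    simp only [Function.comp_apply, List.length_cons]
    calc dist (G.g e (G.pathMap γ x)) (G.g e (G.pathMap γ y))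
        = G.r e * dist (G.pathMap γ x) (G.pathMap γ y) := G.g_sim e _ _
      _ ≤ c * (c ^ γ.length * dist x y) :=
          mul_le_mul (hcr e) (ih x y) dist_nonneg hc0
      _ = c ^ (γ.length + 1) * dist x y := by ring

/-- The greedy list following a chosen edge at each vertex. -/
def glist (sel : Fin N → G.Edge) (m : ℕ) : Fin N → List G.Edge :=
  Nat.rec (fun _ => []) (fun _ ih i => sel i :: ih (G.tgt (sel i))) m

lemma glist_zero (sel : Fin N → G.Edge) (i : Fin N) : G.glist sel 0 i = [] := rfl

lemma glist_succ (sel : Fin N → G.Edge) (m : ℕ) (i : Fin N) :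
    G.glist sel (m + 1) i = sel i :: G.glist sel m (G.tgt (sel i)) := rfl

/-- The greedy infinite sequence. -/
def gseq (sel : Fin N → G.Edge) (m : ℕ) : Fin N → G.Edge :=
  Nat.rec (fun i => sel i) (fun _ ih i => ih (G.tgt (sel i))) m

lemma gseq_zero (sel : Fin N → G.Edge) (i : Fin N) : G.gseq sel 0 i = sel i := rfl

lemma gseq_succ (sel : Fin N → G.Edge) (m : ℕ) (i : Fin N) :
    G.gseq sel (m + 1) i = G.gseq sel m (G.tgt (sel i)) := rfl

lemma glist_length (sel : Fin N → G.Edge) :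
    ∀ (m : ℕ) (i : Fin N), (G.glist sel m i).length = m
  | 0, _ => rfl
  | m + 1, i => by
    rw [glist_succ, List.length_cons, glist_length sel m]

lemma prefix_gseq (sel : Fin N → G.Edge) :
    ∀ (m : ℕ) (i : Fin N), prefixList (fun k => G.gseq sel k i) m = G.glist sel m i
  | 0, _ => rfl
  | m + 1, i => by
    show List.ofFn _ = _
    rw [List.ofFn_succ, glist_succ]
    congr 1
    have h : (fun k : Fin m => G.gseq sel ((k.succ : Fin (m + 1)) : ℕ) i) =
        fun k : Fin m => G.gseq sel (k : ℕ) (G.tgt (sel i)) := by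
      funext k
      show G.gseq sel ((k : ℕ) + 1) i = _
      rw [gseq_succ]
    rw [h]
    exact prefix_gseq sel m (G.tgt (sel i))

lemma gseq_chain (sel : Fin N → G.Edge) (hsel : ∀ i, G.src (sel i) = i) :
    ∀ (m : ℕ) (i : Fin N), G.tgt (G.gseq sel m i) = G.src (G.gseq sel (m + 1) i)
  | 0, i => (hsel _).symm
  | m + 1, i => gseq_chain sel hsel m (G.tgt (sel i))

end GIFS

namespace OGIFS

variable {X : Type} [MetricSpace X] {N : ℕ} (G : OGIFS X N)

lemma glist_maps (E : Fin N → Set X)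
    (heq : ∀ i, E i = ⋃ e ∈ {e : G.Edge | G.src e = i}, G.g e '' E (G.tgt e))
    (sel : Fin N → G.Edge) (hsel : ∀ i, G.src (sel i) = i) :
    ∀ (m : ℕ) (i : Fin N) (y : X),
      y ∈ E (G.toGIFS.pathTgt i (G.toGIFS.glist sel m i)) →
        G.toGIFS.pathMap (G.toGIFS.glist sel m i) y ∈ E i := by
  intro m
  induction m with
  | zero => intro i y hy; exact hy
  | succ m ih =>
    intro i y hy
    rw [G.toGIFS.glist_succ, G.toGIFS.pathTgt_cons'] at hy
    rw [G.toGIFS.glist_succ, G.toGIFS.pathMap_cons']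
    rw [heq i]
    exact Set.mem_biUnion (hsel i) ⟨_, ih (G.tgt (sel i)) y hy, rfl⟩

lemma glist_fix (sel : Fin N → G.Edge) (p : Fin N → X)
    (hfix : ∀ i, G.g (sel i) (p (G.tgt (sel i))) = p i) :
    ∀ (m : ℕ) (i : Fin N),
      G.toGIFS.pathMap (G.toGIFS.glist sel m i)
        (p (G.toGIFS.pathTgt i (G.toGIFS.glist sel m i))) = p i := by
  intro m
  induction m with
  | zero => intro i; rfl
  | succ m ih =>
    intro i
    rw [G.toGIFS.glist_succ, G.toGIFS.pathTgt_cons', G.toGIFS.pathMap_cons']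
    show G.g (sel i) (G.toGIFS.pathMap _ _) = p i
    rw [ih (G.tgt (sel i)), hfix i]

lemma fixed_mem (E : Fin N → Set X) (hE : G.toGIFS.IsInvariant E)
    (c : ℝ) (hc0 : 0 ≤ c) (hc1 : c < 1) (hcr : ∀ e, G.r e ≤ c)
    (sel : Fin N → G.Edge) (hsel : ∀ i, G.src (sel i) = i)
    (p : Fin N → X) (hfix : ∀ i, G.g (sel i) (p (G.tgt (sel i))) = p i) :
    ∀ j, p j ∈ E j := by
  obtain ⟨hne, hcomp, heq⟩ := hE
  choose x hx using hne
  intro j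
  obtain ⟨B, hB⟩ : ∃ B : ℝ, ∀ i, dist (p i) (x i) ≤ B := by
    obtain ⟨B, hB⟩ := (Set.finite_range fun i => dist (p i) (x i)).bddAbove
    exact ⟨B, fun i => hB (Set.mem_range_self i)⟩
  have hB0 : (0 : ℝ) ≤ B := le_trans dist_nonneg (hB j)
  have hclosed : IsClosed (E j) := (hcomp j).isClosed
  rw [← hclosed.closure_eq, Metric.mem_closure_iff]
  intro ε hε
  have hB1 : (0 : ℝ) < B + 1 := by linarith
  obtain ⟨m, hm⟩ := exists_pow_lt_of_lt_one (div_pos hε hB1) hc1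
  set γ := G.toGIFS.glist sel m j with hγ
  set t := G.toGIFS.pathTgt j γ with ht
  refine ⟨G.toGIFS.pathMap γ (x t), G.glist_maps E heq sel hsel m j _ (hx t), ?_⟩
  have h1 : dist (p j) (G.toGIFS.pathMap γ (x t))
      = dist (G.toGIFS.pathMap γ (p t)) (G.toGIFS.pathMap γ (x t)) := by
    rw [G.glist_fix sel p hfix m j]
  rw [h1]
  calc dist (G.toGIFS.pathMap γ (p t)) (G.toGIFS.pathMap γ (x t))
      ≤ c ^ γ.length * dist (p t) (x t) :=
        G.toGIFS.pathMap_dist_le c hc0 hcr γ _ _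
    _ ≤ c ^ γ.length * (B + 1) := by
        refine mul_le_mul_of_nonneg_left ?_ (pow_nonneg hc0 _)
        linarith [hB t]
    _ < ε := by
        rw [hγ, G.toGIFS.glist_length]
        exact (lt_div_iff₀ hB1).mp hm

lemma mem_pathSet_glist (E : Fin N → Set X)
    (sel : Fin N → G.Edge) (p : Fin N → X)
    (hpE : ∀ j, p j ∈ E j)
    (hfix : ∀ i, G.g (sel i) (p (G.tgt (sel i))) = p i) :
    ∀ (m : ℕ) (i : Fin N), p i ∈ G.toGIFS.pathSet E i (G.toGIFS.glist sel m i) := by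
  intro m
  induction m with
  | zero =>
    intro i
    rw [G.toGIFS.glist_zero, G.toGIFS.pathSet_nil']
    exact hpE i
  | succ m ih =>
    intro i
    rw [G.toGIFS.glist_succ, G.toGIFS.pathSet_cons']
    exact ⟨p (G.tgt (sel i)), ih (G.tgt (sel i)), hfix i⟩

lemma glist_min (r : G.Edge → G.Edge → Prop) (sel : Fin N → G.Edge)
    (hmin : ∀ (i : Fin N) (f : G.Edge), G.src f = i → f = sel i ∨ r (sel i) f) :
    ∀ (m : ℕ) (i : Fin N) (γ : List G.Edge), G.toGIFS.IsPathFrom i γ → γ.length = m →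
      γ = G.toGIFS.glist sel m i ∨ List.Lex r (G.toGIFS.glist sel m i) γ := by
  intro m
  induction m with
  | zero =>
    intro i γ _ hlen
    left
    exact List.length_eq_zero_iff.mp hlen
  | succ m ih =>
    rintro i γ ⟨hch, hhd⟩ hlen
    match γ, hch, hhd, hlen with
    | f :: γ', hch, hhd, hlen =>
      have hsrc : G.src f = i := hhd f rfl
      rw [G.toGIFS.glist_succ]
      rcases hmin i f hsrc with h | h
      · subst h
        have hpath' : G.toGIFS.IsPathFrom (G.tgt (sel i)) γ' := by
          refine ⟨hch.tail, ?_⟩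
          intro e he
          cases γ' with
          | nil => simp at he
          | cons e' l =>
            have he' : e' = e := by simpa using he
            subst he'
            exact ((List.isChain_cons_cons).mp hch).1.symm
        rcases ih (G.tgt (sel i)) γ' hpath' (by simpa using hlen) with h2 | h2
        · left; rw [h2]
        · right; exact List.Lex.cons h2
      · right; exact List.Lex.rel h


lemma exists_extreme (E : Fin N → Set X)
    (sel : Fin N → G.Edge) (hsel : ∀ i, G.src (sel i) = i)
    (r : G.Edge → G.Edge → Prop)
    (hmin : ∀ (i : Fin N) (f : G.Edge), G.src f = i → f = sel i ∨ r (sel i) f)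
    (p : Fin N → X) (hpE : ∀ j, p j ∈ E j)
    (hfix : ∀ i, G.g (sel i) (p (G.tgt (sel i))) = p i) (i : Fin N) :
    ∃ ω : G.toGIFS.InfPath i,
      (∀ (k : ℕ) (γ : List G.Edge), G.toGIFS.IsPathFrom i γ → γ.length = k →
        γ = prefixList ω.1 k ∨ List.Lex r (prefixList ω.1 k) γ) ∧
      ∀ k : ℕ, p i ∈ G.toGIFS.pathSet E i (prefixList ω.1 k) := by
  refine ⟨⟨fun k => G.toGIFS.gseq sel k i, hsel i,
    fun k => G.toGIFS.gseq_chain sel hsel k i⟩, ?_, ?_⟩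
  · intro k γ hγ hlen
    show γ = prefixList (fun j => G.toGIFS.gseq sel j i) k ∨
      List.Lex r (prefixList (fun j => G.toGIFS.gseq sel j i) k) γ
    rw [G.toGIFS.prefix_gseq]
    exact G.glist_min r sel hmin k i γ hγ hlen
  · intro k
    show p i ∈ G.toGIFS.pathSet E i (prefixList (fun j => G.toGIFS.gseq sel j i) k)
    rw [G.toGIFS.prefix_gseq]
    exact G.mem_pathSet_glist E sel p hpE hfix k i

end OGIFS

lemma lex_swap_of_length_eq {α : Type*} {r : α → α → Prop} :
    ∀ {l₁ l₂ : List α}, List.Lex (Function.swap r) l₁ l₂ → l₁.length = l₂.length →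
      List.Lex r l₂ l₁ := by
  intro l₁ l₂ h
  induction h with
  | nil => intro h; simp at h
  | @rel a l₁ b l₂ h => intro _; exact List.Lex.rel h
  | @cons a l₁ l₂ h ih => intro hl; exact List.Lex.cons (ih (by simpa using hl))

end AuxHeadTail

/-- For the two-state ordered GIFS associated to a path-on-lattice IFS with path from
`0` to `d`: the head of `E_1` is `0` and its tail is `d`, while the head of `E_{-1}`
is `d` and its tail is `0`. -/
theorem pathOnLattice_head_tail {n : ℕ} (Φ : PathOnLattice n)
    (E : Fin 2 → Set ℂ) (hE : Φ.gifs.toGIFS.IsInvariant E) :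
    Φ.gifs.IsHead E 0 0 ∧ Φ.gifs.IsTail E 0 Φ.dd ∧
    Φ.gifs.IsHead E 1 Φ.dd ∧ Φ.gifs.IsTail E 1 0 := by
  cases n with
  | zero =>
    exfalso
    obtain ⟨hne, _, heq⟩ := hE
    obtain ⟨x, hx⟩ := hne 0
    rw [heq 0] at hx
    rw [Set.mem_iUnion₂] at hx
    obtain ⟨e, -, -⟩ := hx
    exact (Prod.snd e).elim0
  | succ m =>
    classical
    set G := Φ.gifs with hG
    have h01 : ∀ i : Fin 2, i = 0 ∨ i = 1 := by decide
    have hsrc : ∀ e : Fin 2 × Fin (m + 1), G.src e = e.1 := fun _ => rfl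
    have hg : ∀ e : Fin 2 × Fin (m + 1), G.g e = Φ.φ e.2 := fun _ => rfl
    have helt : ∀ e f : Fin 2 × Fin (m + 1), G.elt e f ↔
        (e.1 = f.1 ∧ ((e.1 = 0 ∧ e.2 < f.2) ∨ (e.1 ≠ 0 ∧ f.2 < e.2))) := fun _ _ => Iff.rfl
    have hzz : ∀ k : Fin (m + 1), Φ.z k.succ ≠ Φ.z k.castSucc := by
      intro k h
      have h1 := Φ.hstep k
      rw [h, sub_self, norm_zero] at h1
      exact zero_ne_one h1
    have hvpos_d : ∀ k : Fin (m + 1), Φ.vpos k → Φ.φ k Φ.dd = Φ.z k.succ := by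
      intro k hv
      rcases Φ.hends k with ⟨_, h2⟩ | ⟨h1, _⟩
      · exact h2
      · exact absurd (hv.symm.trans h1) (fun h => hzz k h.symm)
    have hnvpos : ∀ k : Fin (m + 1), ¬ Φ.vpos k →
        Φ.φ k 0 = Φ.z k.succ ∧ Φ.φ k Φ.dd = Φ.z k.castSucc := by
      intro k hv
      rcases Φ.hends k with ⟨h1, _⟩ | ⟨h1, h2⟩
      · exact absurd h1 hv
      · exact ⟨h1, h2⟩
    have hz0 : Φ.z (Fin.castSucc 0) = 0 := by rw [Fin.castSucc_zero, Φ.hz0]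
    have hdd : Φ.z (Fin.last m).succ = Φ.dd := by rw [Fin.succ_last]; rfl
    set selL : Fin 2 → Fin 2 × Fin (m + 1) := ![(0, 0), (1, Fin.last m)] with hselL
    set selH : Fin 2 → Fin 2 × Fin (m + 1) := ![(0, Fin.last m), (1, 0)] with hselH
    set p : Fin 2 → ℂ := ![0, Φ.dd] with hp
    set q : Fin 2 → ℂ := ![Φ.dd, 0] with hq
    have hselL0 : selL 0 = (0, 0) := rfl
    have hselL1 : selL 1 = (1, Fin.last m) := rfl
    have hselH0 : selH 0 = (0, Fin.last m) := rfl
    have hselH1 : selH 1 = (1, 0) := rfl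
    have hp0 : p 0 = 0 := rfl
    have hp1 : p 1 = Φ.dd := rfl
    have hq0 : q 0 = Φ.dd := rfl
    have hq1 : q 1 = 0 := rfl
    have htgt : ∀ e : Fin 2 × Fin (m + 1), G.tgt e =
        (if e.1 = 0 then (if Φ.vpos e.2 then 0 else 1)
          else (if Φ.vpos e.2 then 1 else 0)) := fun _ => rfl
    have hsL : ∀ i, G.src (selL i) = i := by
      intro i
      rcases h01 i with rfl | rfl <;> rfl
    have hsH : ∀ i, G.src (selH i) = i := by
      intro i
      rcases h01 i with rfl | rfl <;> rfl
    have hfixL : ∀ i, G.g (selL i) (p (G.tgt (selL i))) = p i := by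
      intro i
      rcases h01 i with rfl | rfl
      · rw [hselL0, hg, htgt]
        rw [if_pos (rfl : ((0, (0 : Fin (m+1))) : Fin 2 × Fin (m+1)).1 = 0)]
        by_cases hv : Φ.vpos (0 : Fin (m + 1))
        · rw [if_pos hv, hp0]
          exact hv.trans hz0
        · rw [if_neg hv, hp1, hp0]
          exact ((hnvpos 0 hv).2).trans hz0
      · rw [hselL1, hg, htgt]
        rw [if_neg (show ¬ (((1, Fin.last m) : Fin 2 × Fin (m+1)).1 = 0) by exact (by decide : ¬ ((1 : Fin 2) = 0)))]
        by_cases hv : Φ.vpos (Fin.last m)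
        · rw [if_pos hv, hp1]
          exact (hvpos_d _ hv).trans hdd
        · rw [if_neg hv, hp0, hp1]
          exact ((hnvpos _ hv).1).trans hdd
    have hfixH : ∀ i, G.g (selH i) (q (G.tgt (selH i))) = q i := by
      intro i
      rcases h01 i with rfl | rfl
      · rw [hselH0, hg, htgt]
        rw [if_pos (rfl : ((0, Fin.last m) : Fin 2 × Fin (m+1)).1 = 0)]
        by_cases hv : Φ.vpos (Fin.last m)
        · rw [if_pos hv, hq0]
          exact (hvpos_d _ hv).trans hdd
        · rw [if_neg hv, hq1, hq0]
          exact ((hnvpos _ hv).1).trans hdd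
      · rw [hselH1, hg, htgt]
        rw [if_neg (show ¬ (((1, (0 : Fin (m+1))) : Fin 2 × Fin (m+1)).1 = 0) by exact (by decide : ¬ ((1 : Fin 2) = 0)))]
        by_cases hv : Φ.vpos (0 : Fin (m + 1))
        · rw [if_pos hv, hq1]
          exact hv.trans hz0
        · rw [if_neg hv, hq0, hq1]
          exact ((hnvpos 0 hv).2).trans hz0
    have hminL : ∀ (i : Fin 2) (f : Fin 2 × Fin (m + 1)),
        G.src f = i → f = selL i ∨ G.elt (selL i) f := by
      intro i f h
      rw [hsrc] at h
      rcases h01 i with rfl | rfl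
      · by_cases h2 : f.2 = 0
        · left; rw [hselL0]; exact Prod.ext h h2
        · right
          rw [hselL0, helt]
          exact ⟨h.symm, Or.inl ⟨rfl, Fin.pos_of_ne_zero h2⟩⟩
      · by_cases h2 : f.2 = Fin.last m
        · left; rw [hselL1]; exact Prod.ext h h2
        · right
          rw [hselL1, helt]
          exact ⟨h.symm, Or.inr ⟨by exact (by decide : ¬ ((1 : Fin 2) = 0)), lt_of_le_of_ne (Fin.le_last _) h2⟩⟩
    have hminH : ∀ (i : Fin 2) (f : Fin 2 × Fin (m + 1)),
        G.src f = i → f = selH i ∨ Function.swap G.elt (selH i) f := by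
      intro i f h
      rw [hsrc] at h
      rcases h01 i with rfl | rfl
      · by_cases h2 : f.2 = Fin.last m
        · left; rw [hselH0]; exact Prod.ext h h2
        · right
          rw [hselH0]
          rw [show Function.swap G.elt ((0, Fin.last m) : Fin 2 × Fin (m+1)) f
            = G.elt f (0, Fin.last m) from rfl, helt]
          exact ⟨h, Or.inl ⟨h, lt_of_le_of_ne (Fin.le_last _) h2⟩⟩
      · by_cases h2 : f.2 = 0
        · left; rw [hselH1]; exact Prod.ext h h2
        · right
          rw [hselH1]
          rw [show Function.swap G.elt ((1, (0 : Fin (m+1))) : Fin 2 × Fin (m+1)) f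
            = G.elt f (1, 0) from rfl, helt]
          refine ⟨h, Or.inr ⟨?_, Fin.pos_of_ne_zero h2⟩⟩
          rw [h]; decide
    obtain ⟨c, hc0, hc1, hcr⟩ : ∃ c : ℝ, 0 ≤ c ∧ c < 1 ∧
        ∀ e : Fin 2 × Fin (m + 1), G.r e ≤ c := by
      refine ⟨Finset.univ.sup' Finset.univ_nonempty
        (fun k : Fin (m + 1) => ‖Φ.α k‖), ?_, ?_, ?_⟩
      · exact le_trans (Φ.hcontr 0).1.le (Finset.le_sup' (fun k : Fin (m + 1) => ‖Φ.α k‖) (Finset.mem_univ 0))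
      · rw [Finset.sup'_lt_iff]
        intro k _
        exact (Φ.hcontr k).2
      · intro e
        exact Finset.le_sup' (fun k : Fin (m + 1) => ‖Φ.α k‖) (Finset.mem_univ e.2)
    have hpE : ∀ j, p j ∈ E j := G.fixed_mem E hE c hc0 hc1 hcr selL hsL p hfixL
    have hqE : ∀ j, q j ∈ E j := G.fixed_mem E hE c hc0 hc1 hcr selH hsH q hfixH
    have headOf : ∀ i : Fin 2, G.IsHead E i (p i) := by
      intro i
      obtain ⟨ω, hlow, hmem⟩ := G.exists_extreme E selL hsL G.elt hminL p hpE hfixL i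
      exact ⟨ω, hlow, hmem⟩
    have tailOf : ∀ i : Fin 2, G.IsTail E i (q i) := by
      intro i
      obtain ⟨ω, hhigh, hmem⟩ :=
        G.exists_extreme E selH hsH (Function.swap G.elt) hminH q hqE hfixH i
      refine ⟨ω, ?_, hmem⟩
      intro k γ hγ hlen
      rcases hhigh k γ hγ hlen with h2 | h2
      · exact Or.inl h2
      · refine Or.inr (lex_swap_of_length_eq h2 ?_)
        rw [hlen]
        simp [prefixList]
    exact ⟨hp0 ▸ headOf 0, hq0 ▸ tailOf 0, hp1 ▸ headOf 1, hq1 ▸ tailOf 1⟩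

end
end

section
/- Let (A,Γ,G,≺) be a linear GIFS on ℝ^d with open set condition and 0 < h_i := H^δ(E_i) < ∞ for all i, let G* be its measure-recording GIFS with projections ρ_i : Γ_i^∞ → F_i = [0,h_i]. If ω ≠ γ are infinite paths in Γ_i^∞ with ρ_i(ω) = ρ_i(γ), then for every n ≥ 1 the prefixes ω|_n and γ|_n are either equal or adjacent in the dictionary order on Γ_i^n. -/
open MeasureTheory Set

/- ### Auxiliary development for the proof of `rho_codings_prefixes_adjacent` -/
noncomputable section
namespace SFCAux

open OGIFS GIFS Filter Set List

variable {d N : ℕ}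

/-- Row sum `∑_{e ∈ Γ_u} h_{t(e)} r_e^δ`. -/
def rS (G : OGIFS (EuclideanSpace ℝ (Fin d)) N) (δ : ℝ) (h : Fin N → ℝ) (u : Fin N) : ℝ :=
  ∑ e : G.Edge, if G.src e = u then h (G.tgt e) * G.r e ^ δ else 0

variable {G : OGIFS (EuclideanSpace ℝ (Fin d)) N} {δ : ℝ} {h : Fin N → ℝ} {i : Fin N}

lemma rpow_pos (e : G.Edge) : 0 < G.r e ^ δ := Real.rpow_pos_of_pos (G.r_pos e) δ

lemma rpow_lt_one (hδ : 0 < δ) (e : G.Edge) : G.r e ^ δ < 1 :=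
  Real.rpow_lt_one (G.r_pos e).le (G.r_lt_one e) hδ

lemma bCoef_nonneg (hpos : ∀ j, 0 < h j) (e : G.Edge) : 0 ≤ G.bCoef δ h e := by
  apply Finset.sum_nonneg
  intro e' _
  split
  · exact mul_nonneg (hpos _).le (rpow_pos e').le
  · exact le_refl 0

lemma fmap_eq (e : G.Edge) (x : ℝ) : G.fmap δ h e x = G.r e ^ δ * x + G.bCoef δ h e := rfl

lemma fPathMap_nil (z : ℝ) : G.fPathMap δ h [] z = z := rfl

lemma fPathMap_cons (e : G.Edge) (l : List G.Edge) (z : ℝ) :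
    G.fPathMap δ h (e :: l) z = G.fmap δ h e (G.fPathMap δ h l z) := rfl

lemma fPathMap_strictMono (l : List G.Edge) : StrictMono (G.fPathMap δ h l) := by
  induction l with
  | nil => exact fun a b hab => hab
  | cons e l ih =>
      intro a b hab
      have h1 : G.fPathMap δ h l a < G.fPathMap δ h l b := ih hab
      have h2 := mul_lt_mul_of_pos_left h1 (rpow_pos (δ := δ) e)
      simp only [fPathMap_cons, fmap_eq]
      linarith

lemma fPathMap_nonneg (hpos : ∀ j, 0 < h j) (l : List G.Edge) {z : ℝ} (hz : 0 ≤ z) :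
    0 ≤ G.fPathMap δ h l z := by
  induction l with
  | nil => exact hz
  | cons e l ih =>
      simp only [fPathMap_cons, fmap_eq]
      have := rpow_pos (δ := δ) e
      have := bCoef_nonneg (G := G) (δ := δ) hpos e
      nlinarith

lemma fPathMap_append (l₁ l₂ : List G.Edge) (z : ℝ) :
    G.fPathMap δ h (l₁ ++ l₂) z = G.fPathMap δ h l₁ (G.fPathMap δ h l₂ z) := by
  induction l₁ with
  | nil => rfl
  | cons e l ih => simp only [List.cons_append, fPathMap_cons, ih]

/- ### path lemmas -/

lemma isPathFrom_nil (u : Fin N) : G.toGIFS.IsPathFrom u [] :=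
  ⟨List.isChain_nil, by simp⟩

lemma pathTgt_nil (u : Fin N) : G.toGIFS.pathTgt u [] = u := rfl

lemma pathTgt_cons (u : Fin N) (e : G.Edge) (l : List G.Edge) :
    G.toGIFS.pathTgt u (e :: l) = G.toGIFS.pathTgt (G.tgt e) l := by
  cases l with
  | nil => rfl
  | cons b l' =>
      show (List.getLast? (e :: b :: l')).elim u G.tgt = _
      rw [List.getLast?_cons_cons, List.getLast?_eq_getLast (l := b :: l') (by simp)]
      rfl

lemma isPathFrom_cons {u : Fin N} {e : G.Edge} {l : List G.Edge}
    (hp : G.toGIFS.IsPathFrom u (e :: l)) :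
    G.src e = u ∧ G.toGIFS.IsPathFrom (G.tgt e) l := by
  obtain ⟨hc, hhd⟩ := hp
  refine ⟨hhd e (by simp), hc.tail, ?_⟩
  intro b hb
  cases l with
  | nil => simp at hb
  | cons b' l' =>
      simp at hb
      subst hb
      exact ((List.isChain_cons_cons).mp hc).1.symm

lemma isPathFrom_snoc {σ : List G.Edge} {e : G.Edge}
    (hσ : G.toGIFS.IsPathFrom i σ) (he : G.src e = G.toGIFS.pathTgt i σ) :
    G.toGIFS.IsPathFrom i (σ ++ [e]) ∧ G.toGIFS.pathTgt i (σ ++ [e]) = G.tgt e := by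
  constructor
  · constructor
    · refine List.isChain_append.mpr ⟨hσ.1, List.isChain_singleton e, ?_⟩
      intro x hx y hy
      simp at hy
      subst hy
      have hx' : σ.getLast? = some x := Option.mem_def.mp hx
      have : G.toGIFS.pathTgt i σ = G.tgt x := by
        simp [GIFS.pathTgt, hx']
      rw [this] at he
      exact he.symm
    · intro b hb
      cases σ with
      | nil =>
          simp at hb
          subst hb
          rw [he, pathTgt_nil]
      | cons a l =>
          simp at hb
          subst hb
          exact hσ.2 a (by simp)
  · simp [GIFS.pathTgt, List.getLast?_concat]
/- ### prefix lemmas -/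

lemma prefixList_length (f : ℕ → G.Edge) (n : ℕ) : (prefixList f n).length = n := by
  simp [prefixList]

lemma prefixList_succ (f : ℕ → G.Edge) (m : ℕ) :
    prefixList f (m + 1) = prefixList f m ++ [f m] := by
  rw [prefixList, List.ofFn_succ']
  simp [prefixList, List.concat_eq_append]

lemma prefix_isPath (ω : G.toGIFS.InfPath i) (n : ℕ) :
    G.toGIFS.IsPathFrom i (prefixList ω.1 n) := by
  constructor
  · refine List.isChain_iff_getElem.mpr ?_
    intro k hk
    simp only [prefixList] at hk ⊢
    simp only [List.getElem_ofFn]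
    exact ω.2.2 k
  · intro e he
    cases n with
    | zero => simp [prefixList] at he
    | succ m =>
        have : prefixList ω.1 (m + 1) = ω.1 0 :: List.ofFn (fun j : Fin m => ω.1 (j + 1)) := by
          rw [prefixList, List.ofFn_succ]
          rfl
        rw [this] at he
        simp at he
        subst he
        exact ω.2.1

/- ### maximal edges -/

lemma exists_max_aux {u : Fin N} (s : Finset G.Edge) (hs : s.Nonempty)
    (hsrc : ∀ e ∈ s, G.src e = u) :
    ∃ m ∈ s, ∀ a ∈ s, a ≠ m → G.elt a m := by
  classical
  induction s using Finset.induction_on with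
  | empty => exact absurd hs (by simp)
  | @insert a t hat ih =>
      rcases t.eq_empty_or_nonempty with rfl | ht
      · refine ⟨a, by simp, ?_⟩
        intro b hb hba
        simp at hb
        exact absurd hb hba
      · obtain ⟨m, hm, hmax⟩ := ih ht (fun e he => hsrc e (Finset.mem_insert_of_mem he))
        have hsa : G.src a = u := hsrc a (Finset.mem_insert_self a t)
        have hsm : G.src m = u := hsrc m (Finset.mem_insert_of_mem hm)
        rcases G.elt_total a m (hsa.trans hsm.symm) with hal | heq | hma
        · refine ⟨m, Finset.mem_insert_of_mem hm, ?_⟩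
          intro b hb hbm
          rcases Finset.mem_insert.mp hb with rfl | hbt
          · exact hal
          · exact hmax b hbt hbm
        · subst heq
          refine ⟨a, Finset.mem_insert_self a t, ?_⟩
          intro b hb hba
          rcases Finset.mem_insert.mp hb with rfl | hbt
          · exact absurd rfl hba
          · exact hmax b hbt hba
        · refine ⟨a, Finset.mem_insert_self a t, ?_⟩
          intro b hb hba
          rcases Finset.mem_insert.mp hb with rfl | hbt
          · exact absurd rfl hba
          · by_cases hbm : b = m
            · subst hbm; exact hma
            · exact G.elt_trans (hmax b hbt hbm) hma

lemma exists_maxEdge (ho : ∀ u : Fin N, ∃ e : G.Edge, G.src e = u) (u : Fin N) :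
    ∃ m : G.Edge, G.src m = u ∧ ∀ a, G.src a = u → a ≠ m → G.elt a m := by
  classical
  obtain ⟨e, he⟩ := ho u
  obtain ⟨m, hm, hmax⟩ := exists_max_aux (u := u)
    (Finset.univ.filter (fun e => G.src e = u)) ⟨e, by simp [he]⟩
    (fun e he' => (Finset.mem_filter.mp he').2)
  refine ⟨m, (Finset.mem_filter.mp hm).2, ?_⟩
  intro a ha hane
  exact hmax a (by simp [ha]) hane

def maxEdge (ho : ∀ u : Fin N, ∃ e : G.Edge, G.src e = u) (u : Fin N) : G.Edge :=
  (exists_maxEdge ho u).choose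

lemma maxEdge_src (ho : ∀ u : Fin N, ∃ e : G.Edge, G.src e = u) (u : Fin N) :
    G.src (maxEdge ho u) = u := (exists_maxEdge ho u).choose_spec.1

lemma maxEdge_max (ho : ∀ u : Fin N, ∃ e : G.Edge, G.src e = u) {u : Fin N} {a : G.Edge}
    (ha : G.src a = u) (hne : a ≠ maxEdge ho u) : G.elt a (maxEdge ho u) :=
  (exists_maxEdge ho u).choose_spec.2 a ha hne

def nxt (ho : ∀ u : Fin N, ∃ e : G.Edge, G.src e = u) (u : Fin N) : Fin N :=
  G.tgt (maxEdge ho u)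

def mc (ho : ∀ u : Fin N, ∃ e : G.Edge, G.src e = u) : Fin N → ℕ → G.Edge
  | u, 0 => maxEdge ho u
  | u, k + 1 => mc ho (nxt ho u) k

def maxChain (ho : ∀ u : Fin N, ∃ e : G.Edge, G.src e = u) : Fin N → ℕ → List G.Edge
  | _, 0 => []
  | u, k + 1 => maxEdge ho u :: maxChain ho (nxt ho u) k

def chEnd (ho : ∀ u : Fin N, ∃ e : G.Edge, G.src e = u) : Fin N → ℕ → Fin N
  | u, 0 => u
  | u, k + 1 => chEnd ho (nxt ho u) k

lemma mc_chain (ho : ∀ u : Fin N, ∃ e : G.Edge, G.src e = u) :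
    ∀ (k : ℕ) (u : Fin N), G.tgt (mc ho u k) = G.src (mc ho u (k + 1)) := by
  intro k
  induction k with
  | zero => intro u; rw [show mc ho u 1 = mc ho (nxt ho u) 0 from rfl]
            exact (maxEdge_src ho (nxt ho u)).symm
  | succ k ih => intro u; exact ih (nxt ho u)

lemma maxChain_snoc (ho : ∀ u : Fin N, ∃ e : G.Edge, G.src e = u) :
    ∀ (k : ℕ) (u : Fin N), maxChain ho u (k + 1) = maxChain ho u k ++ [mc ho u k] := by
  intro k
  induction k with
  | zero => intro u; rfl
  | succ k ih =>
      intro u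
      show maxEdge ho u :: maxChain ho (nxt ho u) (k + 1) = _
      rw [ih (nxt ho u)]
      rfl
/- ### sum comparison lemmas for `bCoef` and row sums -/

open Classical in
lemma bCoef_split {e : G.Edge} :
    G.bCoef δ h e + h (G.tgt e) * G.r e ^ δ =
      ∑ e' : G.Edge, ((if G.elt e' e then h (G.tgt e') * G.r e' ^ δ else 0) +
        (if e' = e then h (G.tgt e') * G.r e' ^ δ else 0)) := by
  classical
  rw [Finset.sum_add_distrib, Finset.sum_ite_eq' Finset.univ e]
  simp [OGIFS.bCoef]

lemma bCoef_le_bCoef (hpos : ∀ j, 0 < h j) {e f : G.Edge} (hef : G.elt e f) :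
    G.bCoef δ h e + h (G.tgt e) * G.r e ^ δ ≤ G.bCoef δ h f := by
  classical
  rw [bCoef_split]
  simp only [OGIFS.bCoef]
  apply Finset.sum_le_sum
  intro e' _
  by_cases h1 : e' = e
  · subst h1
    rw [if_neg (G.elt_irrefl e'), if_pos rfl, if_pos hef]
    simp
  · rw [if_neg h1]
    by_cases h2 : G.elt e' e
    · rw [if_pos h2, if_pos (G.elt_trans h2 hef)]
      simp
    · rw [if_neg h2, zero_add]
      split
      · exact mul_nonneg (hpos _).le (rpow_pos e').le
      · exact le_refl 0

lemma bCoef_add_le_rS (hpos : ∀ j, 0 < h j) (e : G.Edge) :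
    G.bCoef δ h e + h (G.tgt e) * G.r e ^ δ ≤ rS G δ h (G.src e) := by
  classical
  rw [bCoef_split]
  apply Finset.sum_le_sum
  intro e' _
  by_cases h1 : e' = e
  · subst h1
    rw [if_neg (G.elt_irrefl e'), if_pos rfl, if_pos rfl]
    simp
  · rw [if_neg h1]
    by_cases h2 : G.elt e' e
    · rw [if_pos h2, if_pos (G.elt_src h2)]
      simp
    · rw [if_neg h2, zero_add]
      split
      · exact mul_nonneg (hpos _).le (rpow_pos e').le
      · exact le_refl 0

lemma rS_eq_maxEdge (ho : ∀ u : Fin N, ∃ e : G.Edge, G.src e = u) (u : Fin N) :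
    rS G δ h u = G.bCoef δ h (maxEdge ho u) +
      h (G.tgt (maxEdge ho u)) * G.r (maxEdge ho u) ^ δ := by
  classical
  rw [bCoef_split]
  apply Finset.sum_congr rfl
  intro e' _
  by_cases h1 : e' = maxEdge ho u
  · subst h1
    rw [if_neg (G.elt_irrefl _), if_pos rfl, if_pos (maxEdge_src ho u)]
    simp
  · by_cases h2 : G.elt e' (maxEdge ho u)
    · rw [if_pos h2, if_neg h1, if_pos ((G.elt_src h2).trans (maxEdge_src ho u))]
      simp
    · rw [if_neg h2, if_neg h1]
      by_cases h3 : G.src e' = u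
      · exact absurd (maxEdge_max ho h3 h1) h2
      · rw [if_neg h3]
        simp

/- ### the telescoping estimate along maximal chains -/

lemma maxChain_prod_nonneg (ho : ∀ u : Fin N, ∃ e : G.Edge, G.src e = u) :
    ∀ (k : ℕ) (u : Fin N),
      0 ≤ ((maxChain ho u k).map (fun e => G.r e ^ δ)).prod := by
  intro k
  induction k with
  | zero => intro u; simp [maxChain]
  | succ k ih =>
      intro u
      show 0 ≤ ((maxEdge ho u :: maxChain ho (nxt ho u) k).map _).prod
      rw [List.map_cons, List.prod_cons]
      exact mul_nonneg (rpow_pos _).le (ih (nxt ho u))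

lemma maxChain_prod_le (ho : ∀ u : Fin N, ∃ e : G.Edge, G.src e = u)
    {q : ℝ} (hq0 : 0 ≤ q) (hq : ∀ e : G.Edge, G.r e ^ δ ≤ q) :
    ∀ (k : ℕ) (u : Fin N),
      ((maxChain ho u k).map (fun e => G.r e ^ δ)).prod ≤ q ^ k := by
  intro k
  induction k with
  | zero => intro u; simp [maxChain]
  | succ k ih =>
      intro u
      show ((maxEdge ho u :: maxChain ho (nxt ho u) k).map _).prod ≤ q ^ (k + 1)
      rw [List.map_cons, List.prod_cons, pow_succ, mul_comm (q ^ k) q]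
      exact mul_le_mul (hq _) (ih (nxt ho u)) (maxChain_prod_nonneg ho k (nxt ho u))
        hq0

lemma telescope (hpos : ∀ j, 0 < h j) (hsub : ∀ j, h j ≤ rS G δ h j)
    (ho : ∀ u : Fin N, ∃ e : G.Edge, G.src e = u) :
    ∀ (k : ℕ) (u : Fin N),
      rS G δ h u ≤ G.fPathMap δ h (maxChain ho u (k + 1)) 0 +
        ((maxChain ho u (k + 1)).map (fun e => G.r e ^ δ)).prod *
          h (chEnd ho u (k + 1)) := by
  intro k
  induction k with
  | zero =>
      intro u
      have hnxt : nxt ho u = G.tgt (maxEdge ho u) := rfl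
      show rS G δ h u ≤ G.fPathMap δ h [maxEdge ho u] 0 +
        (([maxEdge ho u]).map (fun e => G.r e ^ δ)).prod * h (nxt ho u)
      rw [rS_eq_maxEdge ho u, hnxt]
      simp only [fPathMap_cons, fPathMap_nil, fmap_eq, List.map_cons, List.map_nil,
        List.prod_cons, List.prod_nil]
      apply le_of_eq
      ring
  | succ k ih =>
      intro u
      have hnxt : nxt ho u = G.tgt (maxEdge ho u) := rfl
      have hih := ih (nxt ho u)
      have hs := hsub (nxt ho u)
      have hr := rpow_pos (G := G) (δ := δ) (maxEdge ho u)
      have hmul := mul_le_mul_of_nonneg_left (hs.trans hih) hr.le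
      show rS G δ h u ≤
        G.fPathMap δ h (maxEdge ho u :: maxChain ho (nxt ho u) (k + 1)) 0 +
        ((maxEdge ho u :: maxChain ho (nxt ho u) (k + 1)).map (fun e => G.r e ^ δ)).prod *
          h (chEnd ho (nxt ho u) (k + 1))
      rw [List.map_cons, List.prod_cons, fPathMap_cons, fmap_eq, rS_eq_maxEdge ho u, ← hnxt]
      linarith [hmul]
/- ### the row inequality at reachable vertices -/

lemma row_le (hδpos : 0 < δ) (hpos : ∀ j, 0 < h j) (hsub : ∀ j, h j ≤ rS G δ h j)
    (ho : ∀ u : Fin N, ∃ e : G.Edge, G.src e = u)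
    {ρ : G.toGIFS.InfPath i → ℝ} (hρ : G.IsFCoding δ h i ρ)
    (σ : List G.Edge) (hσ : G.toGIFS.IsPathFrom i σ) :
    rS G δ h (G.toGIFS.pathTgt i σ) ≤ h (G.toGIFS.pathTgt i σ) := by
  classical
  obtain ⟨hc, hhd⟩ := hσ
  set u := G.toGIFS.pathTgt i σ with hu
  set n := σ.length with hn
  set θ : ℕ → G.Edge := fun j => if hj : j < n then σ.get ⟨j, hj⟩ else mc ho u (j - n)
    with hθdef
  have hθlt : ∀ (j) (hj : j < n), θ j = σ.get ⟨j, hj⟩ := fun j hj => dif_pos hj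
  have hθge : ∀ j, n ≤ j → θ j = mc ho u (j - n) := fun j hj => dif_neg (by omega)
  have hlast : ∀ (j) (hj : j < σ.length), j = σ.length - 1 → G.tgt (σ.get ⟨j, hj⟩) = u := by
    intro j hj hj1
    have hne : σ ≠ [] := by
      intro hnil
      rw [hnil] at hj
      simp at hj
    have h1 : σ.getLast hne = σ.get ⟨j, hj⟩ := by
      subst hj1
      rw [List.getLast_eq_getElem]
      rfl
    rw [hu]
    show _ = (σ.getLast?).elim i G.tgt
    rw [List.getLast?_eq_getLast hne, h1]
    rfl
  have hsrc0 : G.src (θ 0) = i := by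
    rcases Nat.eq_zero_or_pos n with h0 | h0
    · have hσe : σ = [] := List.length_eq_zero_iff.mp (by omega)
      have hui : u = i := by rw [hu, hσe]; rfl
      rw [hθge 0 (by omega), show 0 - n = 0 from by omega]
      show G.src (maxEdge ho u) = i
      rw [maxEdge_src, hui]
    · rw [hθlt 0 h0]
      refine hhd _ ?_
      cases σ with
      | nil => simp [hn] at h0
      | cons a l => simp
  have hchain : ∀ m, G.tgt (θ m) = G.src (θ (m + 1)) := by
    intro m
    rcases lt_trichotomy (m + 1) n with hlt | heq | hgt
    · rw [hθlt m (by omega), hθlt (m + 1) hlt]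
      exact List.isChain_iff_getElem.mp hc m (by omega)
    · rw [hθlt m (by omega), hθge (m + 1) (by omega),
        show m + 1 - n = 0 from by omega]
      show _ = G.src (maxEdge ho u)
      rw [maxEdge_src]
      exact hlast m (by omega) (by omega)
    · rw [hθge m (by omega), hθge (m + 1) (by omega),
        show m + 1 - n = (m - n) + 1 from by omega]
      exact mc_chain ho (m - n) u
  have hpre0 : prefixList θ n = σ := by
    apply List.ext_get
    · simp [prefixList, hn]
    · intro j h1 h2
      simp only [prefixList] at h1 ⊢
      rw [List.get_ofFn]
      simp only [Fin.coe_cast]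
      exact hθlt j (by omega)
  have hpre : ∀ k, prefixList θ (n + k) = σ ++ maxChain ho u k := by
    intro k
    induction k with
    | zero => rw [Nat.add_zero, hpre0, show maxChain ho u 0 = [] from rfl, List.append_nil]
    | succ k ih =>
        rw [show n + (k + 1) = (n + k) + 1 from rfl, prefixList_succ, ih,
          maxChain_snoc ho k u, ← List.append_assoc]
        congr 2
        rw [hθge (n + k) (by omega), show n + k - n = k from by omega]
  have hx0 := hρ ⟨θ, hsrc0, hchain⟩ n
  rw [show prefixList θ n = σ from hpre0] at hx0
  obtain ⟨y, hy, hxy⟩ := hx0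
  have key : ∀ k, G.fPathMap δ h (maxChain ho u (k + 1)) 0 ≤ h u := by
    intro k
    have hk := hρ ⟨θ, hsrc0, hchain⟩ (n + (k + 1))
    rw [show prefixList θ (n + (k + 1)) = σ ++ maxChain ho u (k + 1) from hpre (k + 1)] at hk
    obtain ⟨z, hz, hzx⟩ := hk
    rw [fPathMap_append] at hzx
    have hzy : G.fPathMap δ h (maxChain ho u (k + 1)) z = y :=
      (fPathMap_strictMono σ).injective (by rw [hzx, hxy])
    have h0z : G.fPathMap δ h (maxChain ho u (k + 1)) 0 ≤
        G.fPathMap δ h (maxChain ho u (k + 1)) z :=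
      (fPathMap_strictMono _).monotone hz.1
    rw [hzy] at h0z
    exact h0z.trans hy.2
  obtain ⟨e₀, -⟩ := ho i
  haveI : Nonempty G.Edge := ⟨e₀⟩
  have hUNE : (Finset.univ : Finset G.Edge).Nonempty := Finset.univ_nonempty
  set q := Finset.univ.sup' hUNE (fun e => G.r e ^ δ) with hq
  have hq0 : 0 ≤ q := by
    rw [hq]
    exact le_trans (rpow_pos (G := G) (δ := δ) e₀).le
      (Finset.le_sup' (fun e => G.r e ^ δ) (Finset.mem_univ e₀))
  have hqe : ∀ e : G.Edge, G.r e ^ δ ≤ q := by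
    intro e
    rw [hq]
    exact Finset.le_sup' (fun e => G.r e ^ δ) (Finset.mem_univ e)
  have hq1 : q < 1 := by
    rw [Finset.sup'_lt_iff]
    intro e _
    exact rpow_lt_one hδpos e
  set Hm := Finset.univ.sup' ⟨i, Finset.mem_univ i⟩ h with hHmdef
  have hHm : ∀ j, h j ≤ Hm := fun j => Finset.le_sup' h (Finset.mem_univ j)
  have hHm0 : 0 ≤ Hm := (hpos i).le.trans (hHm i)
  have bound : ∀ k : ℕ, rS G δ h u ≤ h u + q ^ k * Hm := by
    intro k
    have t1 := telescope hpos hsub ho k u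
    have t2 := key k
    have t3 : ((maxChain ho u (k + 1)).map (fun e => G.r e ^ δ)).prod *
        h (chEnd ho u (k + 1)) ≤ q ^ (k + 1) * Hm :=
      mul_le_mul
        (maxChain_prod_le ho hq0 hqe (k + 1) u)
        (hHm _) (hpos _).le (pow_nonneg hq0 _)
    have t4 : q ^ (k + 1) ≤ q ^ k := by
      rw [pow_succ]
      nlinarith [pow_nonneg hq0 k]
    have t5 : q ^ (k + 1) * Hm ≤ q ^ k * Hm := mul_le_mul_of_nonneg_right t4 hHm0
    linarith
  have htend : Filter.Tendsto (fun k : ℕ => h u + q ^ k * Hm) Filter.atTop (nhds (h u)) := by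
    have t1 := tendsto_pow_atTop_nhds_zero_of_lt_one hq0 hq1
    have t2 := t1.mul_const Hm
    have t3 := t2.const_add (h u)
    simpa using t3
  exact ge_of_tendsto' htend bound
/- ### cylinder containment and the dictionary-order comparison -/

lemma contained (hpos : ∀ j, 0 < h j)
    (hrow : ∀ σ : List G.Edge, G.toGIFS.IsPathFrom i σ →
      rS G δ h (G.toGIFS.pathTgt i σ) ≤ h (G.toGIFS.pathTgt i σ)) :
    ∀ (τ σ : List G.Edge), G.toGIFS.IsPathFrom i σ →
      G.toGIFS.IsPathFrom (G.toGIFS.pathTgt i σ) τ →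
      ∀ z, z ∈ Icc 0 (h (G.toGIFS.pathTgt (G.toGIFS.pathTgt i σ) τ)) →
      G.fPathMap δ h τ z ∈ Icc (0 : ℝ) (h (G.toGIFS.pathTgt i σ)) := by
  intro τ
  induction τ with
  | nil => intro σ hσ _ z hz; exact hz
  | cons e τ' ih =>
      intro σ hσ hτ z hz
      obtain ⟨hse, hτ'⟩ := isPathFrom_cons hτ
      obtain ⟨hσ', hpt⟩ := isPathFrom_snoc hσ hse
      rw [pathTgt_cons, ← hpt] at hz
      have hτ'' : G.toGIFS.IsPathFrom (G.toGIFS.pathTgt i (σ ++ [e])) τ' := by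
        rw [hpt]; exact hτ'
      have hw := ih (σ ++ [e]) hσ' hτ'' z hz
      rw [hpt] at hw
      constructor
      · rw [fPathMap_cons, fmap_eq]
        have h1 := mul_nonneg (rpow_pos (G := G) (δ := δ) e).le hw.1
        have h2 := bCoef_nonneg (G := G) (δ := δ) hpos e
        linarith
      · rw [fPathMap_cons, fmap_eq]
        have h1 : G.r e ^ δ * G.fPathMap δ h τ' z ≤ G.r e ^ δ * h (G.tgt e) :=
          mul_le_mul_of_nonneg_left hw.2 (rpow_pos (G := G) (δ := δ) e).le
        have h2 := bCoef_add_le_rS (G := G) (δ := δ) hpos e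
        have h3 := hrow σ hσ
        rw [hse] at h2
        linarith
  
lemma orderLe (hpos : ∀ j, 0 < h j)
    (hrow : ∀ σ : List G.Edge, G.toGIFS.IsPathFrom i σ →
      rS G δ h (G.toGIFS.pathTgt i σ) ≤ h (G.toGIFS.pathTgt i σ)) :
    ∀ (α β σ : List G.Edge), G.toGIFS.IsPathFrom i σ →
      G.toGIFS.IsPathFrom (G.toGIFS.pathTgt i σ) α →
      G.toGIFS.IsPathFrom (G.toGIFS.pathTgt i σ) β →
      α.length = β.length → List.Lex G.elt α β →
      ∀ z w, z ∈ Icc 0 (h (G.toGIFS.pathTgt (G.toGIFS.pathTgt i σ) α)) →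
        w ∈ Icc 0 (h (G.toGIFS.pathTgt (G.toGIFS.pathTgt i σ) β)) →
        G.fPathMap δ h α z ≤ G.fPathMap δ h β w := by
  intro α
  induction α with
  | nil =>
      intro β σ _ _ _ hlen hlex
      cases hlex
      simp at hlen
  | cons e α' ih =>
      intro β σ hσ hα hβ hlen hlex z w hz hw
      cases hlex with
      | cons h' =>
          rename_i β'
          obtain ⟨hse, hα'⟩ := isPathFrom_cons hα
          obtain ⟨_, hβ'⟩ := isPathFrom_cons hβ
          obtain ⟨hσ', hpt⟩ := isPathFrom_snoc hσ hse
          rw [pathTgt_cons, ← hpt] at hz hw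
          have hα'' : G.toGIFS.IsPathFrom (G.toGIFS.pathTgt i (σ ++ [e])) α' := by
            rw [hpt]; exact hα'
          have hβ'' : G.toGIFS.IsPathFrom (G.toGIFS.pathTgt i (σ ++ [e])) β' := by
            rw [hpt]; exact hβ'
          have hles := ih β' (σ ++ [e]) hσ' hα'' hβ'' (by simpa using hlen) h' z w hz hw
          rw [fPathMap_cons, fPathMap_cons, fmap_eq, fmap_eq]
          have := mul_le_mul_of_nonneg_left hles (rpow_pos (G := G) (δ := δ) e).le
          linarith
      | rel hef =>
          rename_i f β'
          obtain ⟨hse, hα'⟩ := isPathFrom_cons hα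
          obtain ⟨hsf, hβ'⟩ := isPathFrom_cons hβ
          obtain ⟨hσ', hpt⟩ := isPathFrom_snoc hσ hse
          rw [pathTgt_cons, ← hpt] at hz
          have hα'' : G.toGIFS.IsPathFrom (G.toGIFS.pathTgt i (σ ++ [e])) α' := by
            rw [hpt]; exact hα'
          have hca := contained hpos hrow α' (σ ++ [e]) hσ' hα'' z hz
          rw [hpt] at hca
          have h1 : G.r e ^ δ * G.fPathMap δ h α' z ≤ G.r e ^ δ * h (G.tgt e) :=
            mul_le_mul_of_nonneg_left hca.2 (rpow_pos (G := G) (δ := δ) e).le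
          have h2 := bCoef_le_bCoef (G := G) (δ := δ) hpos hef
          have h3 : (0 : ℝ) ≤ G.fPathMap δ h β' w := by
            apply fPathMap_nonneg hpos
            rw [pathTgt_cons] at hw
            exact hw.1
          have h4 := mul_nonneg (rpow_pos (G := G) (δ := δ) f).le h3
          rw [fPathMap_cons, fPathMap_cons, fmap_eq, fmap_eq]
          linarith

lemma trich :
    ∀ (α β : List G.Edge) (u : Fin N), G.toGIFS.IsPathFrom u α →
      G.toGIFS.IsPathFrom u β → α.length = β.length →
      α = β ∨ List.Lex G.elt α β ∨ List.Lex G.elt β α := by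
  intro α
  induction α with
  | nil =>
      intro β u _ _ hlen
      left
      exact (List.length_eq_zero_iff.mp hlen.symm).symm
  | cons e α' ih =>
      intro β u hα hβ hlen
      cases β with
      | nil => simp at hlen
      | cons f β' =>
          have hse := (isPathFrom_cons hα).1
          have hsf := (isPathFrom_cons hβ).1
          rcases G.elt_total e f (hse.trans hsf.symm) with hef | heq | hfe
          · exact Or.inr (Or.inl (List.Lex.rel hef))
          · subst heq
            rcases ih β' (G.tgt e) (isPathFrom_cons hα).2 (isPathFrom_cons hβ).2
              (by simpa using hlen) with h1 | h2 | h3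
            · left; rw [h1]
            · exact Or.inr (Or.inl (List.Lex.cons h2))
            · exact Or.inr (Or.inr (List.Lex.cons h3))
          · exact Or.inr (Or.inr (List.Lex.rel hfe))
end SFCAux
end

noncomputable section
/-- If `ω ≠ γ` are two `ρ_i`-codings of the same point of `F_i`, then for every
`n ≥ 1` the prefixes `ω|_n` and `γ|_n` are equal or adjacent in the dictionary
order on `Γ_i^n`. -/
theorem rho_codings_prefixes_adjacent {d N : ℕ} (G : OGIFS (EuclideanSpace ℝ (Fin d)) N)
    (E : Fin N → Set (EuclideanSpace ℝ (Fin d))) (hE : G.toGIFS.IsInvariant E) (hlin : G.IsLinear E)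
    (hosc : G.toGIFS.OSC) (δ : ℝ) (hδ : G.toGIFS.IsSimDim δ)
    (hfin : ∀ j, 0 < μH[δ] (E j) ∧ μH[δ] (E j) < ⊤)
    (h : Fin N → ℝ) (hh : ∀ j, h j = (μH[δ] (E j)).toReal) (i : Fin N)
    (ρ : G.toGIFS.InfPath i → ℝ) (hρ : G.IsFCoding δ h i ρ)
    (ω γ : G.toGIFS.InfPath i) (hne : ω ≠ γ) (hx : ρ ω = ρ γ) :
    ∀ n : ℕ, 1 ≤ n →
      prefixList ω.1 n = prefixList γ.1 n ∨
      G.Adjacent i (prefixList ω.1 n) (prefixList γ.1 n) ∨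
      G.Adjacent i (prefixList γ.1 n) (prefixList ω.1 n) := by
  intro n _
  classical
  have hδpos : 0 < δ := hδ.1
  have hpos : ∀ j, 0 < h j := by
    intro j
    rw [hh j]
    exact ENNReal.toReal_pos (hfin j).1.ne' (hfin j).2.ne
  have ho : ∀ u : Fin N, ∃ e : G.Edge, G.src e = u := by
    intro u
    obtain ⟨x, hxE⟩ := hE.1 u
    rw [hE.2.2 u] at hxE
    simp only [Set.mem_iUnion, Set.mem_setOf_eq] at hxE
    obtain ⟨e, he, -⟩ := hxE
    exact ⟨e, he⟩
  have hsub : ∀ j, h j ≤ SFCAux.rS G δ h j := by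
    intro j
    have hmeas : ∀ e : G.Edge, μH[δ] (G.g e '' E (G.tgt e)) ≤
        ((G.r e).toNNReal : ENNReal) ^ δ * μH[δ] (E (G.tgt e)) := by
      intro e
      have hlip : LipschitzWith (G.r e).toNNReal (G.g e) := by
        apply LipschitzWith.of_dist_le_mul
        intro x y
        rw [G.g_sim, Real.coe_toNNReal _ (G.r_pos e).le]
      exact LipschitzOnWith.hausdorffMeasure_image_le
        (hlip.lipschitzOnWith (s := E (G.tgt e))) hδpos.le
    have hcover : μH[δ] (E j) ≤
        ∑ e ∈ Finset.univ.filter (fun e => G.src e = j),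
          μH[δ] (G.g e '' E (G.tgt e)) := by
      conv_lhs => rw [hE.2.2 j]
      refine le_trans (measure_mono ?_) (measure_biUnion_finset_le _ _)
      intro x hx'
      simp only [Set.mem_iUnion, Set.mem_setOf_eq] at hx'
      obtain ⟨e, he, hxe⟩ := hx'
      simp only [Set.mem_iUnion]
      exact ⟨e, by simp [he], hxe⟩
    have hterm : ∀ e : G.Edge, ((G.r e).toNNReal : ENNReal) ^ δ * μH[δ] (E (G.tgt e)) ≠ ⊤ :=
      fun e => ENNReal.mul_ne_top
        (ENNReal.rpow_ne_top_of_nonneg hδpos.le ENNReal.coe_ne_top) (hfin (G.tgt e)).2.ne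
    have h1 : μH[δ] (E j) ≤ ∑ e ∈ Finset.univ.filter (fun e => G.src e = j),
        ((G.r e).toNNReal : ENNReal) ^ δ * μH[δ] (E (G.tgt e)) :=
      hcover.trans (Finset.sum_le_sum (fun e _ => hmeas e))
    have hsumne : (∑ e ∈ Finset.univ.filter (fun e => G.src e = j),
        ((G.r e).toNNReal : ENNReal) ^ δ * μH[δ] (E (G.tgt e))) ≠ ⊤ := by
      rw [← lt_top_iff_ne_top]
      rw [ENNReal.sum_lt_top]
      intro e _
      exact lt_top_iff_ne_top.mpr (hterm e)
    have h2 := ENNReal.toReal_mono hsumne h1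
    rw [hh j]
    refine h2.trans ?_
    rw [ENNReal.toReal_sum (fun e _ => hterm e)]
    have h3 : ∀ e : G.Edge, (((G.r e).toNNReal : ENNReal) ^ δ * μH[δ] (E (G.tgt e))).toReal
        = G.r e ^ δ * h (G.tgt e) := by
      intro e
      rw [ENNReal.toReal_mul, ← ENNReal.toReal_rpow, ENNReal.coe_toReal,
        Real.coe_toNNReal _ (G.r_pos e).le, hh (G.tgt e)]
    rw [Finset.sum_congr rfl (fun e _ => h3 e)]
    unfold SFCAux.rS
    rw [Finset.sum_filter]
    apply le_of_eq
    apply Finset.sum_congr rfl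
    intro e _
    split
    · exact mul_comm _ _
    · rfl
  have hrow : ∀ σ : List G.Edge, G.toGIFS.IsPathFrom i σ →
      SFCAux.rS G δ h (G.toGIFS.pathTgt i σ) ≤ h (G.toGIFS.pathTgt i σ) :=
    fun σ hσ => SFCAux.row_le hδpos hpos hsub ho hρ σ hσ
  have adj : ∀ (α β : List G.Edge) (x : ℝ), G.toGIFS.IsPathFrom i α →
      G.toGIFS.IsPathFrom i β → α.length = β.length → List.Lex G.elt α β →
      x ∈ G.fPathSet δ h i α → x ∈ G.fPathSet δ h i β → G.Adjacent i α β := by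
    intro α β x hA hB hl hlex hxα hxβ
    refine ⟨hA, hB, hl, hlex, ?_⟩
    rintro ⟨η, hη, hηl, h1, h2⟩
    obtain ⟨z, hz, hzx⟩ := hxα
    obtain ⟨w, hw, hwx⟩ := hxβ
    have k1 : G.fPathMap δ h α z ≤ G.fPathMap δ h η 0 :=
      SFCAux.orderLe hpos hrow α η [] (SFCAux.isPathFrom_nil i) hA hη hηl.symm h1 z 0
        hz ⟨le_refl 0, (hpos _).le⟩
    have k2 : G.fPathMap δ h η (h (G.toGIFS.pathTgt i η)) ≤ G.fPathMap δ h β w :=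
      SFCAux.orderLe hpos hrow η β [] (SFCAux.isPathFrom_nil i) hη hB (hηl.trans hl) h2
        (h (G.toGIFS.pathTgt i η)) w ⟨(hpos _).le, le_refl _⟩ hw
    have k3 : G.fPathMap δ h η 0 < G.fPathMap δ h η (h (G.toGIFS.pathTgt i η)) :=
      SFCAux.fPathMap_strictMono η (hpos _)
    rw [hzx] at k1
    rw [hwx] at k2
    linarith
  have hA := SFCAux.prefix_isPath ω n
  have hB := SFCAux.prefix_isPath γ n
  have hlen : (prefixList ω.1 n).length = (prefixList γ.1 n).length := by
    rw [SFCAux.prefixList_length, SFCAux.prefixList_length]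
  rcases SFCAux.trich (prefixList ω.1 n) (prefixList γ.1 n) i hA hB hlen with he | hl | hl
  · exact Or.inl he
  · exact Or.inr (Or.inl (adj _ _ (ρ ω) hA hB hlen hl (hρ ω n)
      (by rw [hx]; exact hρ γ n)))
  · exact Or.inr (Or.inr (adj _ _ (ρ ω) hB hA hlen.symm hl
      (by rw [hx]; exact hρ γ n) (hρ ω n)))
end
end
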